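/- arXiv:2509.12010 — 4 statements merged into one kernel-verified Lean document; each statement's English description precedes it below -/
import Mathlib

section
/- There exist a finite discounted MDP without reward M = (S, A, s0, p, γ) and two deterministic policies π1, π2 on M such that the Lebesgue measure in ℝ^{S×A} of [−1,+1]^{S×A} ∩ R^{OPT,S}_{M,π1} is different from the Lebesgue measure of [−1,+1]^{S×A} ∩ R^{OPT,S}_{M,π2}. -/
open scoped ENNReal

open scoped BigOperators
open MeasureTheory

/-- A finite discounted MDP without reward. -/
structure MDP (S A : Type) [Fintype S] [Fintype A] where
  s0 : S
  p : S → A → S → ℝ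
  p_nonneg : ∀ s a s', 0 ≤ p s a s'
  p_sum_one : ∀ s a, ∑ s', p s a s' = 1
  disc : ℝ
  disc_nonneg : 0 ≤ disc
  disc_lt_one : disc < 1

section Defs

variable {S A : Type} [Fintype S] [Fintype A] [DecidableEq S] [DecidableEq A]

/-- `π` is a (stochastic) policy: each `π s` is a probability distribution on actions. -/
def IsPolicy (π : S → A → ℝ) : Prop :=
  (∀ s a, 0 ≤ π s a) ∧ ∀ s, ∑ a, π s a = 1

open Classical in
/-- The stochastic policy induced by a deterministic policy `d`. -/
noncomputable def detPolicy (d : S → A) : S → A → ℝ :=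
  fun s a => if a = d s then 1 else 0

/-- The state-transition matrix of a policy. -/
noncomputable def Pmat (M : MDP S A) (π : S → A → ℝ) : Matrix S S ℝ :=
  Matrix.of fun s s' => ∑ a, π s a * M.p s a s'

/-- The value function `V^π(s; p, r)`. -/
noncomputable def Vpi (M : MDP S A) (π : S → A → ℝ) (r : S × A → ℝ) (s : S) : ℝ :=
  ∑' t : ℕ, M.disc ^ t * ((Pmat M π ^ t).mulVec (fun s' => ∑ a, π s' a * r (s', a))) s

/-- The optimal value function `V*(s; p, r)`. -/
noncomputable def Vstar (M : MDP S A) (r : S × A → ℝ) (s : S) : ℝ :=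
  ⨆ π : {π : S → A → ℝ // IsPolicy π}, Vpi M π.1 r s

noncomputable def Qpi (M : MDP S A) (π : S → A → ℝ) (r : S × A → ℝ) (s : S) (a : A) : ℝ :=
  r (s, a) + M.disc * ∑ s', M.p s a s' * Vpi M π r s'

noncomputable def Api (M : MDP S A) (π : S → A → ℝ) (r : S × A → ℝ) (s : S) (a : A) : ℝ :=
  Qpi M π r s a - Vpi M π r s

noncomputable def Qstar (M : MDP S A) (r : S × A → ℝ) (s : S) (a : A) : ℝ :=
  r (s, a) + M.disc * ∑ s', M.p s a s' * Vstar M r s'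

noncomputable def Astar (M : MDP S A) (r : S × A → ℝ) (s : S) (a : A) : ℝ :=
  Qstar M r s a - Vstar M r s

/-- The soft (entropy-regularized) value function `V^π_λ(s; p, r)`. -/
noncomputable def VpiSoft (M : MDP S A) (lam : ℝ) (π : S → A → ℝ) (r : S × A → ℝ) (s : S) : ℝ :=
  ∑' t : ℕ, M.disc ^ t *
    ((Pmat M π ^ t).mulVec
      (fun s' => ∑ a, π s' a * (r (s', a) - lam * Real.log (π s' a)))) s

noncomputable def VstarSoft (M : MDP S A) (lam : ℝ) (r : S × A → ℝ) (s : S) : ℝ :=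
  ⨆ π : {π : S → A → ℝ // IsPolicy π}, VpiSoft M lam π.1 r s

noncomputable def QstarSoft (M : MDP S A) (lam : ℝ) (r : S × A → ℝ) (s : S) (a : A) : ℝ :=
  r (s, a) + M.disc * ∑ s', M.p s a s' * VstarSoft M lam r s'

noncomputable def AstarSoft (M : MDP S A) (lam : ℝ) (r : S × A → ℝ) (s : S) (a : A) : ℝ :=
  QstarSoft M lam r s a - VstarSoft M lam r s

/-- The OPT feasible set `R^{OPT,S̄}_{M,d}` of a deterministic policy `d`. -/
def ROPT (M : MDP S A) (Sbar : Set S) (d : S → A) : Set (S × A → ℝ) :=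
  {r | ∀ s ∈ Sbar, ∀ a, Qstar M r s a ≤ Qstar M r s (d s)}

/-- The MCE feasible set `R^{MCE,S}_{M,π}` (with `S̄ = S`). -/
def RMCE (M : MDP S A) (lam : ℝ) (π : S → A → ℝ) : Set (S × A → ℝ) :=
  {r | ∀ s a, π s a =
      Real.exp (QstarSoft M lam r s a / lam) / ∑ a', Real.exp (QstarSoft M lam r s a' / lam)}

/-- The BIRL feasible set `R^{BIRL,S}_{M,π}` (with `S̄ = S`). -/
def RBIRL (M : MDP S A) (bet : ℝ) (π : S → A → ℝ) : Set (S × A → ℝ) :=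
  {r | ∀ s a, π s a =
      Real.exp (Qstar M r s a / bet) / ∑ a', Real.exp (Qstar M r s a' / bet)}

open Classical in
/-- The matrix `W_{p,π}`. -/
noncomputable def Wmat (M : MDP S A) (π : S → A → ℝ) : Matrix S S ℝ :=
  Matrix.of fun s s' => (if s' = s then (1 : ℝ) else 0) - M.disc * ∑ a, π s a * M.p s a s'

/-- `k_π := |det W_{p,π}|^{-1/|S|}`. -/
noncomputable def kpi (M : MDP S A) (π : S → A → ℝ) : ℝ :=
  |(Wmat M π).det| ^ (-(1 : ℝ) / (Fintype.card S : ℝ))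

/-- `𝒮R^{OPT}_M`. -/
def SROPT (M : MDP S A) (C1 C2 : ℝ) : Set (S × A → ℝ) :=
  {r | ∀ π : S → A → ℝ, IsPolicy π → (∀ s, Vpi M π r s = Vstar M r s) →
      ∀ s a, |Vpi M π r s| ≤ C1 * kpi M π ∧ |Api M π r s a| ≤ C2}

/-- `𝒮R^{MCE}_M`. -/
def SRMCE (M : MDP S A) (lam C1 C2 : ℝ) : Set (S × A → ℝ) :=
  {r | ∀ s a, |VstarSoft M lam r s| ≤ C1 ∧ |AstarSoft M lam r s a| ≤ C2}

/-- `𝒮R^{BIRL}_M`. -/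
def SRBIRL (M : MDP S A) (C1 C2 : ℝ) : Set (S × A → ℝ) :=
  {r | ∀ s a, |Vstar M r s| ≤ C1 ∧ |Astar M r s a| ≤ C2}

/-- Discounted state occupancy `∑_{t≥0} γ^t P_{M,π}(s_t = s)`. -/
noncomputable def occ (M : MDP S A) (π : S → A → ℝ) (s : S) : ℝ :=
  ∑' t : ℕ, M.disc ^ t * (Pmat M π ^ t) M.s0 s

/-- The support `S_{M,π}` of a policy: states reachable with positive probability. -/
def supp (M : MDP S A) (π : S → A → ℝ) : Set S := {s | 0 < occ M π s}

end Defs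

/-- The unit hypercube `[-1,1]^{S×A}`. -/
def cube (S A : Type) [Fintype S] [Fintype A] : Set (S × A → ℝ) :=
  {r | ∀ sa, |r sa| ≤ 1}

set_option linter.unusedSectionVars false
set_option linter.unusedVariables false

open Finset

section Stoch
variable {S : Type} [Fintype S] [DecidableEq S]

/-- Powers of a row-stochastic matrix are row-stochastic. -/
lemma stoch_pow (P : Matrix S S ℝ) (h0 : ∀ s s', 0 ≤ P s s') (h1 : ∀ s, ∑ s', P s s' = 1)
    (n : ℕ) : (∀ s s', 0 ≤ (P ^ n) s s') ∧ (∀ s, ∑ s', (P ^ n) s s' = 1) := by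
  induction n with
  | zero =>
    constructor
    · intro s s'
      by_cases h : s = s' <;> simp [Matrix.one_apply, h]
    · intro s
      simp [Matrix.one_apply]
  | succ n ih =>
    constructor
    · intro s s'
      rw [pow_succ, Matrix.mul_apply]
      exact Finset.sum_nonneg fun k _ => mul_nonneg (ih.1 s k) (h0 k s')
    · intro s
      rw [pow_succ]
      simp only [Matrix.mul_apply]
      rw [Finset.sum_comm]
      simp_rw [← Finset.mul_sum]
      simp_rw [h1]
      simpa using ih.2 s

lemma mulVec_abs_le (P : Matrix S S ℝ) (h0 : ∀ s s', 0 ≤ P s s') (h1 : ∀ s, ∑ s', P s s' = 1)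
    {v : S → ℝ} {C : ℝ} (hC : ∀ s, |v s| ≤ C) (s : S) : |P.mulVec v s| ≤ C := by
  unfold Matrix.mulVec dotProduct
  calc |∑ s', P s s' * v s'| ≤ ∑ s', |P s s' * v s'| := Finset.abs_sum_le_sum_abs _ _
    _ ≤ ∑ s', P s s' * C := by
        refine Finset.sum_le_sum fun s' _ => ?_
        rw [abs_mul, abs_of_nonneg (h0 s s')]
        exact mul_le_mul_of_nonneg_left (hC s') (h0 s s')
    _ = C := by rw [← Finset.sum_mul, h1, one_mul]

lemma mulVec_mono (P : Matrix S S ℝ) (h0 : ∀ s s', 0 ≤ P s s')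
    {v w : S → ℝ} (h : ∀ s, v s ≤ w s) (s : S) : P.mulVec v s ≤ P.mulVec w s := by
  unfold Matrix.mulVec dotProduct
  exact Finset.sum_le_sum fun s' _ => mul_le_mul_of_nonneg_left (h s') (h0 s s')

lemma exists_abs_bound (v : S → ℝ) : ∃ C : ℝ, 0 ≤ C ∧ ∀ s, |v s| ≤ C :=
  ⟨∑ s, |v s|, Finset.sum_nonneg fun s _ => abs_nonneg _,
    fun s => Finset.single_le_sum (fun i _ => abs_nonneg (v i)) (Finset.mem_univ s)⟩

end Stoch

section VpiLemmas
variable {S A : Type} [Fintype S] [Fintype A] [DecidableEq S] [DecidableEq A]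
variable (M : MDP S A) (π : S → A → ℝ)

lemma pmat_nonneg (hπ : IsPolicy π) (s s' : S) : 0 ≤ Pmat M π s s' :=
  Finset.sum_nonneg fun a _ => mul_nonneg (hπ.1 s a) (M.p_nonneg s a s')

lemma pmat_row (hπ : IsPolicy π) (s : S) : ∑ s', Pmat M π s s' = 1 := by
  unfold Pmat
  simp only [Matrix.of_apply]
  rw [Finset.sum_comm]
  simp_rw [← Finset.mul_sum, M.p_sum_one, mul_one]
  exact hπ.2 s

/-- the one-step expected reward under π -/
noncomputable def vbar (r : S × A → ℝ) : S → ℝ := fun s' => ∑ a, π s' a * r (s', a)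

lemma summable_vpi (hπ : IsPolicy π) (r : S × A → ℝ) (s : S) :
    Summable (fun t : ℕ => M.disc ^ t * ((Pmat M π ^ t).mulVec (vbar π r)) s) := by
  obtain ⟨C, hC0, hC⟩ := exists_abs_bound (vbar π r)
  refine Summable.of_norm_bounded (g := fun t => C * M.disc ^ t)
    ((summable_geometric_of_lt_one M.disc_nonneg M.disc_lt_one).mul_left C) (fun t => ?_)
  have h := stoch_pow (Pmat M π) (pmat_nonneg M π hπ) (pmat_row M π hπ) t
  have hb : |((Pmat M π ^ t).mulVec (vbar π r)) s| ≤ C := by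
    rcases t with _ | t
    · simpa [Matrix.one_mulVec] using hC s
    · exact mulVec_abs_le _ h.1 h.2 hC s
  rw [Real.norm_eq_abs, abs_mul, abs_pow, abs_of_nonneg M.disc_nonneg, mul_comm]
  exact mul_le_mul_of_nonneg_right hb (pow_nonneg M.disc_nonneg t)

lemma vpi_eq_tsum (r : S × A → ℝ) (s : S) :
    Vpi M π r s = ∑' t : ℕ, M.disc ^ t * ((Pmat M π ^ t).mulVec (vbar π r)) s := rfl

lemma vpi_rec (hπ : IsPolicy π) (r : S × A → ℝ) (s : S) :
    Vpi M π r s = vbar π r s + M.disc * ((Pmat M π).mulVec (Vpi M π r)) s := by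
  have hsum := summable_vpi M π hπ r
  rw [vpi_eq_tsum, Summable.tsum_eq_zero_add (hsum s)]
  congr 1
  · simp [Matrix.one_mulVec]
  · have hterm : ∀ t : ℕ, M.disc ^ (t+1) * ((Pmat M π ^ (t+1)).mulVec (vbar π r)) s
        = M.disc * ∑ s', Pmat M π s s' * (M.disc ^ t * ((Pmat M π ^ t).mulVec (vbar π r)) s') := by
      intro t
      rw [pow_succ' (Pmat M π) t, ← Matrix.mulVec_mulVec]
      unfold Matrix.mulVec dotProduct
      rw [Finset.mul_sum, Finset.mul_sum]
      congr 1
      ext s'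
      ring
    simp_rw [hterm]
    rw [tsum_mul_left]
    congr 1
    rw [Summable.tsum_finsetSum (fun s' _ => ((hsum s').mul_left _))]
    unfold Matrix.mulVec dotProduct
    congr 1
    ext s'
    conv_rhs => rw [vpi_eq_tsum]
    exact tsum_mul_left
end VpiLemmas

section VpiLemmas2
open Filter Topology
variable {S A : Type} [Fintype S] [Fintype A] [DecidableEq S] [DecidableEq A]

lemma mulVec_sub_smul (P : Matrix S S ℝ) (c : ℝ) (V W : S → ℝ) (s : S) :
    P.mulVec (fun s' => V s' - c * W s') s = P.mulVec V s - c * P.mulVec W s := by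
  unfold Matrix.mulVec dotProduct
  rw [Finset.mul_sum, ← Finset.sum_sub_distrib]
  exact Finset.sum_congr rfl fun s' _ => by ring

lemma fixed_point_unique (P : Matrix S S ℝ) (h0 : ∀ s s', 0 ≤ P s s')
    (h1 : ∀ s, ∑ s', P s s' = 1) {γ : ℝ} (hγ0 : 0 ≤ γ) (hγ1 : γ < 1) (v W W' : S → ℝ)
    (hW : ∀ s, W s = v s + γ * P.mulVec W s) (hW' : ∀ s, W' s = v s + γ * P.mulVec W' s) :
    ∀ s, W s = W' s := by
  set D : S → ℝ := fun s => W s - W' s with hD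
  obtain ⟨C, hC0, hC⟩ := exists_abs_bound D
  have hDrec : ∀ s, D s = γ * P.mulVec D s := by
    intro s
    have : P.mulVec D s = P.mulVec W s - P.mulVec W' s := by
      have := mulVec_sub_smul P 1 W W' s
      simpa using this
    rw [this]
    simp only [hD, hW s, hW' s]
    ring
  have key : ∀ n : ℕ, ∀ s, |D s| ≤ γ ^ n * C := by
    intro n
    induction n with
    | zero => simpa using hC
    | succ n ih =>
      intro s
      rw [hDrec s, abs_mul, abs_of_nonneg hγ0, pow_succ, mul_comm (γ ^ n) γ, mul_assoc]
      exact mul_le_mul_of_nonneg_left (mulVec_abs_le P h0 h1 ih s) hγ0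
  intro s
  have hlim : Tendsto (fun n : ℕ => γ ^ n * C) atTop (𝓝 0) := by
    simpa using (tendsto_pow_atTop_nhds_zero_of_lt_one hγ0 hγ1).mul_const C
  have : |D s| ≤ 0 := ge_of_tendsto hlim (Filter.Eventually.of_forall fun n => key n s)
  have := abs_nonneg (D s)
  have hD0 : D s = 0 := by
    have : |D s| = 0 := le_antisymm ‹|D s| ≤ 0› ‹0 ≤ |D s|›
    exact abs_eq_zero.mp this
  simpa [hD, sub_eq_zero] using hD0

lemma vpi_le_of_bellman_ge (M : MDP S A) (π : S → A → ℝ) (hπ : IsPolicy π) (r : S × A → ℝ)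
    (V : S → ℝ)
    (hBell : ∀ s, vbar π r s + M.disc * (Pmat M π).mulVec V s ≤ V s) (s : S) :
    Vpi M π r s ≤ V s := by
  classical
  set P := Pmat M π with hP
  have h0 := pmat_nonneg M π hπ
  have h1 := pmat_row M π hπ
  have hpow := stoch_pow P h0 h1
  obtain ⟨C, hC0, hC⟩ := exists_abs_bound V
  set v := vbar π r with hv
  set Sn : ℕ → S → ℝ := fun n s => ∑ t ∈ Finset.range n, M.disc ^ t * ((P ^ t).mulVec v) s
    with hSn
  have hrec : ∀ n s, Sn (n + 1) s = v s + M.disc * P.mulVec (Sn n) s := by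
    intro n s
    rw [hSn]
    simp only
    rw [Finset.sum_range_succ']
    have hterm : ∀ t : ℕ, M.disc ^ (t+1) * ((P ^ (t+1)).mulVec v) s
        = M.disc * ∑ s', P s s' * (M.disc ^ t * ((P ^ t).mulVec v) s') := by
      intro t
      rw [pow_succ' P t, ← Matrix.mulVec_mulVec]
      unfold Matrix.mulVec dotProduct
      rw [Finset.mul_sum, Finset.mul_sum]
      congr 1
      ext s'
      ring
    simp_rw [hterm]
    rw [← Finset.mul_sum, Finset.sum_comm]
    have : ∀ s', ∑ t ∈ Finset.range n, P s s' * (M.disc ^ t * ((P ^ t).mulVec v) s')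
        = P s s' * Sn n s' := by
      intro s'
      rw [← Finset.mul_sum]
    simp_rw [this]
    have hmv : P.mulVec (Sn n) s = ∑ s', P s s' * Sn n s' := rfl
    rw [hmv]
    simp [pow_zero, Matrix.one_mulVec]
    ring
  have key : ∀ n s, Sn n s ≤ V s - M.disc ^ n * ((P ^ n).mulVec V) s := by
    intro n
    induction n with
    | zero => intro s; simp [hSn, Matrix.one_mulVec]
    | succ n ih =>
      intro s
      rw [hrec n s]
      have step1 : P.mulVec (Sn n) s ≤ P.mulVec (fun s' => V s' - M.disc ^ n * ((P ^ n).mulVec V) s') s :=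
        mulVec_mono P h0 ih s
      have step2 : P.mulVec (fun s' => V s' - M.disc ^ n * ((P ^ n).mulVec V) s') s
          = P.mulVec V s - M.disc ^ n * ((P ^ (n+1)).mulVec V) s := by
        rw [mulVec_sub_smul]
        congr 2
        rw [pow_succ' P n, ← Matrix.mulVec_mulVec]
      have hBs := hBell s
      have hd0 := M.disc_nonneg
      calc v s + M.disc * P.mulVec (Sn n) s
          ≤ v s + M.disc * (P.mulVec V s - M.disc ^ n * ((P ^ (n+1)).mulVec V) s) := by
            rw [← step2]; nlinarith [step1]
        _ = (v s + M.disc * P.mulVec V s) - M.disc ^ (n+1) * ((P ^ (n+1)).mulVec V) s := by ring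
        _ ≤ V s - M.disc ^ (n+1) * ((P ^ (n+1)).mulVec V) s := by linarith
  have hbound : ∀ n s, Sn n s ≤ V s + M.disc ^ n * C := by
    intro n s
    have h2 := mulVec_abs_le (P ^ n) (hpow n).1 (hpow n).2 hC s
    have h3 := key n s
    have hd : 0 ≤ M.disc ^ n := pow_nonneg M.disc_nonneg n
    nlinarith [abs_le.mp h2]
  have hts : Tendsto (fun n => Sn n s) atTop (𝓝 (Vpi M π r s)) := by
    have := (summable_vpi M π hπ r s).hasSum.tendsto_sum_nat
    exact this
  have hlim : Tendsto (fun n : ℕ => V s + M.disc ^ n * C) atTop (𝓝 (V s)) := by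
    have h := (tendsto_pow_atTop_nhds_zero_of_lt_one M.disc_nonneg M.disc_lt_one).mul_const C
    have h2 := h.const_add (V s)
    simpa using h2
  exact le_of_tendsto_of_tendsto' hts hlim (fun n => hbound n s)

end VpiLemmas2

section Concrete
open Finset

/-- next-state function: everything goes to state 0 except (1,1) which stays at 1. -/
def nxt : Fin 2 → Fin 2 → Fin 2 := fun s a => if s = 1 ∧ a = 1 then 1 else 0

noncomputable def M0 : MDP (Fin 2) (Fin 2) where
  s0 := 0
  p := fun s a s' => if s' = nxt s a then 1 else 0
  p_nonneg := by
    intro s a s'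
    split <;> norm_num
  p_sum_one := by intro s a; simp
  disc := 1/2
  disc_nonneg := by norm_num
  disc_lt_one := by norm_num

lemma sum_p (s a : Fin 2) (f : Fin 2 → ℝ) : ∑ s', M0.p s a s' * f s' = f (nxt s a) := by
  show ∑ s', (if s' = nxt s a then (1:ℝ) else 0) * f s' = f (nxt s a)
  simp [ite_mul]

lemma M0_disc : M0.disc = 1/2 := rfl

/-- The optimal value function, explicitly. -/
noncomputable def Vexp (r : Fin 2 × Fin 2 → ℝ) : Fin 2 → ℝ := fun s =>
  if s = 0 then 2 * max (r (0,0)) (r (0,1))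
  else max (r (1,0) + max (r (0,0)) (r (0,1))) (2 * r (1,1))

lemma Vexp0 (r : Fin 2 × Fin 2 → ℝ) : Vexp r 0 = 2 * max (r (0,0)) (r (0,1)) := rfl

lemma Vexp1 (r : Fin 2 × Fin 2 → ℝ) :
    Vexp r 1 = max (r (1,0) + max (r (0,0)) (r (0,1))) (2 * r (1,1)) := rfl

lemma bell_le (r : Fin 2 × Fin 2 → ℝ) (s a : Fin 2) :
    r (s, a) + M0.disc * ∑ s', M0.p s a s' * Vexp r s' ≤ Vexp r s := by
  rw [sum_p, M0_disc]
  fin_cases s <;> fin_cases a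
  · show r (0,0) + 1/2 * Vexp r (nxt 0 0) ≤ Vexp r 0
    rw [show nxt 0 0 = 0 from rfl, Vexp0]
    have := le_max_left (r (0,0)) (r (0,1))
    linarith
  · show r (0,1) + 1/2 * Vexp r (nxt 0 1) ≤ Vexp r 0
    rw [show nxt 0 1 = 0 from rfl, Vexp0]
    have := le_max_right (r (0,0)) (r (0,1))
    linarith
  · show r (1,0) + 1/2 * Vexp r (nxt 1 0) ≤ Vexp r 1
    rw [show nxt 1 0 = 0 from rfl, Vexp0, Vexp1]
    have := le_max_left (r (1,0) + max (r (0,0)) (r (0,1))) (2 * r (1,1))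
    linarith
  · show r (1,1) + 1/2 * Vexp r (nxt 1 1) ≤ Vexp r 1
    rw [show nxt 1 1 = 1 from rfl, Vexp1]
    have := le_max_right (r (1,0) + max (r (0,0)) (r (0,1))) (2 * r (1,1))
    linarith

lemma bell_eq (r : Fin 2 × Fin 2 → ℝ) :
    ∃ d : Fin 2 → Fin 2, ∀ s,
      r (s, d s) + M0.disc * ∑ s', M0.p s (d s) s' * Vexp r s' = Vexp r s := by
  rcases le_total (r (0,1)) (r (0,0)) with h0 | h0 <;>
    rcases le_total (2 * r (1,1)) (r (1,0) + max (r (0,0)) (r (0,1))) with h1 | h1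
  · refine ⟨fun s => 0, fun s => ?_⟩
    rw [sum_p, M0_disc]
    fin_cases s
    · show r (0,0) + 1/2 * Vexp r (nxt 0 0) = Vexp r 0
      rw [show nxt 0 0 = 0 from rfl, Vexp0, max_eq_left h0]
      ring
    · show r (1,0) + 1/2 * Vexp r (nxt 1 0) = Vexp r 1
      rw [show nxt 1 0 = 0 from rfl, Vexp0, Vexp1, max_eq_left h1]
      ring
  · refine ⟨fun s => if s = 0 then 0 else 1, fun s => ?_⟩
    rw [sum_p, M0_disc]
    fin_cases s
    · show r (0,0) + 1/2 * Vexp r (nxt 0 0) = Vexp r 0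
      rw [show nxt 0 0 = 0 from rfl, Vexp0, max_eq_left h0]
      ring
    · show r (1,1) + 1/2 * Vexp r (nxt 1 1) = Vexp r 1
      rw [show nxt 1 1 = 1 from rfl, Vexp1, max_eq_right h1]
      ring
  · refine ⟨fun s => if s = 0 then 1 else 0, fun s => ?_⟩
    rw [sum_p, M0_disc]
    fin_cases s
    · show r (0,1) + 1/2 * Vexp r (nxt 0 1) = Vexp r 0
      rw [show nxt 0 1 = 0 from rfl, Vexp0, max_eq_right h0]
      ring
    · show r (1,0) + 1/2 * Vexp r (nxt 1 0) = Vexp r 1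
      rw [show nxt 1 0 = 0 from rfl, Vexp0, Vexp1, max_eq_left h1]
      ring
  · refine ⟨fun s => 1, fun s => ?_⟩
    rw [sum_p, M0_disc]
    fin_cases s
    · show r (0,1) + 1/2 * Vexp r (nxt 0 1) = Vexp r 0
      rw [show nxt 0 1 = 0 from rfl, Vexp0, max_eq_right h0]
      ring
    · show r (1,1) + 1/2 * Vexp r (nxt 1 1) = Vexp r 1
      rw [show nxt 1 1 = 1 from rfl, Vexp1, max_eq_right h1]
      ring

end Concrete

section VstarSec
open Finset

lemma vpi_upper (r : Fin 2 × Fin 2 → ℝ) (π : Fin 2 → Fin 2 → ℝ) (hπ : IsPolicy π) (s : Fin 2) :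
    Vpi M0 π r s ≤ Vexp r s := by
  refine vpi_le_of_bellman_ge M0 π hπ r (Vexp r) (fun s1 => ?_) s
  have hmv : (Pmat M0 π).mulVec (Vexp r) s1 = ∑ a, π s1 a * ∑ s', M0.p s1 a s' * Vexp r s' := by
    unfold Pmat Matrix.mulVec dotProduct
    simp only [Matrix.of_apply]
    simp_rw [Finset.sum_mul]
    rw [Finset.sum_comm]
    refine Finset.sum_congr rfl fun a _ => ?_
    rw [Finset.mul_sum]
    exact Finset.sum_congr rfl fun s' _ => by ring
  have expand : vbar π r s1 + M0.disc * (Pmat M0 π).mulVec (Vexp r) s1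
      = ∑ a, π s1 a * (r (s1, a) + M0.disc * ∑ s', M0.p s1 a s' * Vexp r s') := by
    rw [hmv]
    unfold vbar
    rw [Finset.mul_sum, ← Finset.sum_add_distrib]
    exact Finset.sum_congr rfl fun a _ => by ring
  rw [expand]
  calc ∑ a, π s1 a * (r (s1, a) + M0.disc * ∑ s', M0.p s1 a s' * Vexp r s')
      ≤ ∑ a, π s1 a * Vexp r s1 := by
        refine Finset.sum_le_sum fun a _ => ?_
        exact mul_le_mul_of_nonneg_left (bell_le r s1 a) (hπ.1 s1 a)
    _ = Vexp r s1 := by rw [← Finset.sum_mul, hπ.2, one_mul]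

lemma isPolicy_det (d : Fin 2 → Fin 2) : IsPolicy (detPolicy d) := by
  constructor
  · intro s a
    unfold detPolicy
    split <;> norm_num
  · intro s
    unfold detPolicy
    simp

lemma vpi_det_eq (r : Fin 2 × Fin 2 → ℝ) (d : Fin 2 → Fin 2)
    (hd : ∀ s, r (s, d s) + M0.disc * ∑ s', M0.p s (d s) s' * Vexp r s' = Vexp r s) (s : Fin 2) :
    Vpi M0 (detPolicy d) r s = Vexp r s := by
  have hπ := isPolicy_det d
  have hvbar : ∀ s1, vbar (detPolicy d) r s1 = r (s1, d s1) := by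
    intro s1
    unfold vbar detPolicy
    simp [ite_mul]
  have hPd : ∀ s1 s', Pmat M0 (detPolicy d) s1 s' = M0.p s1 (d s1) s' := by
    intro s1 s'
    unfold Pmat detPolicy
    simp [ite_mul]
  have hfix1 : ∀ s1, Vpi M0 (detPolicy d) r s1
      = vbar (detPolicy d) r s1 + M0.disc * (Pmat M0 (detPolicy d)).mulVec (Vpi M0 (detPolicy d) r) s1 :=
    vpi_rec M0 (detPolicy d) hπ r
  have hfix2 : ∀ s1, Vexp r s1
      = vbar (detPolicy d) r s1 + M0.disc * (Pmat M0 (detPolicy d)).mulVec (Vexp r) s1 := by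
    intro s1
    rw [hvbar]
    have : (Pmat M0 (detPolicy d)).mulVec (Vexp r) s1 = ∑ s', M0.p s1 (d s1) s' * Vexp r s' := by
      unfold Matrix.mulVec dotProduct
      exact Finset.sum_congr rfl fun s' _ => by show Pmat M0 (detPolicy d) s1 s' * Vexp r s' = _; rw [hPd]
    rw [this, hd s1]
  exact fixed_point_unique (Pmat M0 (detPolicy d)) (pmat_nonneg M0 _ hπ) (pmat_row M0 _ hπ)
    M0.disc_nonneg M0.disc_lt_one (vbar (detPolicy d) r) _ _ hfix1 hfix2 s

lemma vstar_eq (r : Fin 2 × Fin 2 → ℝ) (s : Fin 2) : Vstar M0 r s = Vexp r s := by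
  obtain ⟨d, hd⟩ := bell_eq r
  haveI : Nonempty {π : Fin 2 → Fin 2 → ℝ // IsPolicy π} := ⟨⟨detPolicy d, isPolicy_det d⟩⟩
  have hbdd : BddAbove (Set.range fun π : {π : Fin 2 → Fin 2 → ℝ // IsPolicy π} => Vpi M0 π.1 r s) := by
    refine ⟨Vexp r s, ?_⟩
    rintro _ ⟨π, rfl⟩
    exact vpi_upper r π.1 π.2 s
  refine le_antisymm (ciSup_le fun π => vpi_upper r π.1 π.2 s) ?_
  have hle := le_ciSup hbdd (⟨detPolicy d, isPolicy_det d⟩ : {π : Fin 2 → Fin 2 → ℝ // IsPolicy π})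
  rw [vpi_det_eq r d hd s] at hle
  exact hle

lemma qstar_eq (r : Fin 2 × Fin 2 → ℝ) (s a : Fin 2) :
    Qstar M0 r s a = r (s, a) + 1/2 * Vexp r (nxt s a) := by
  unfold Qstar
  rw [M0_disc]
  congr 1
  rw [show ∑ s', M0.p s a s' * Vstar M0 r s' = ∑ s', M0.p s a s' * Vexp r s' from
    Finset.sum_congr rfl fun s' _ => by rw [vstar_eq], sum_p]

end VstarSec

section RoptSec

lemma max_eq_left' {a b : ℝ} (h : b ≤ a) : max a b = a := max_eq_left h

lemma ropt1_eq : ROPT M0 Set.univ (fun _ => (0 : Fin 2)) =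
    {r : Fin 2 × Fin 2 → ℝ | r (0,1) ≤ r (0,0) ∧ 2 * r (1,1) ≤ r (1,0) + r (0,0)} := by
  ext r
  simp only [ROPT, Set.mem_setOf_eq, Set.mem_univ, forall_const, true_implies]
  constructor
  · intro h
    have h01 := h 0 1
    have h11 := h 1 1
    rw [qstar_eq r 0 1, qstar_eq r 0 0] at h01
    rw [qstar_eq r 1 1, qstar_eq r 1 0] at h11
    rw [show nxt 0 1 = 0 from rfl, show nxt 0 0 = 0 from rfl] at h01
    rw [show nxt 1 1 = 1 from rfl, show nxt 1 0 = 0 from rfl] at h11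
    have hxu : r (0,1) ≤ r (0,0) := by linarith
    refine ⟨hxu, ?_⟩
    rw [Vexp1, Vexp0, max_eq_left' hxu] at h11
    have hge := le_max_right (r (1,0) + r (0,0)) (2 * r (1,1))
    linarith
  · rintro ⟨hxu, hz⟩ s a
    fin_cases s <;> fin_cases a
    · exact le_refl _
    · show Qstar M0 r 0 1 ≤ Qstar M0 r 0 0
      rw [qstar_eq r 0 1, qstar_eq r 0 0]
      rw [show nxt 0 1 = 0 from rfl, show nxt 0 0 = 0 from rfl]
      linarith
    · exact le_refl _
    · show Qstar M0 r 1 1 ≤ Qstar M0 r 1 0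
      rw [qstar_eq r 1 1, qstar_eq r 1 0]
      rw [show nxt 1 1 = 1 from rfl, show nxt 1 0 = 0 from rfl]
      rw [Vexp1, Vexp0, max_eq_left' hxu, max_eq_left' hz]
      linarith

lemma ropt2_eq : ROPT M0 Set.univ (fun s => s) =
    {r : Fin 2 × Fin 2 → ℝ | r (0,1) ≤ r (0,0) ∧ r (1,0) + r (0,0) ≤ 2 * r (1,1)} := by
  ext r
  simp only [ROPT, Set.mem_setOf_eq, Set.mem_univ, forall_const, true_implies]
  constructor
  · intro h
    have h01 := h 0 1
    have h10 := h 1 0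
    rw [qstar_eq r 0 1, qstar_eq r 0 0] at h01
    rw [qstar_eq r 1 0, qstar_eq r 1 1] at h10
    rw [show nxt 0 1 = 0 from rfl, show nxt 0 0 = 0 from rfl] at h01
    rw [show nxt 1 1 = 1 from rfl, show nxt 1 0 = 0 from rfl] at h10
    have hxu : r (0,1) ≤ r (0,0) := by linarith
    refine ⟨hxu, ?_⟩
    rw [Vexp1, Vexp0, max_eq_left' hxu] at h10
    rcases le_total (2 * r (1,1)) (r (1,0) + r (0,0)) with hc | hc
    · rw [max_eq_left' hc] at h10
      linarith
    · exact hc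
  · rintro ⟨hxu, hz⟩ s a
    fin_cases s <;> fin_cases a
    · exact le_refl _
    · show Qstar M0 r 0 1 ≤ Qstar M0 r 0 0
      rw [qstar_eq r 0 1, qstar_eq r 0 0]
      rw [show nxt 0 1 = 0 from rfl, show nxt 0 0 = 0 from rfl]
      linarith
    · show Qstar M0 r 1 0 ≤ Qstar M0 r 1 1
      rw [qstar_eq r 1 0, qstar_eq r 1 1]
      rw [show nxt 1 1 = 1 from rfl, show nxt 1 0 = 0 from rfl]
      rw [Vexp1, Vexp0, max_eq_left' hxu, max_eq_right hz]
      linarith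
    · exact le_refl _

end RoptSec

section MeasSec
open MeasureTheory Set

/-- index equivalence -/
def e0 : (Fin 2 ⊕ Fin 2) ≃ (Fin 2 × Fin 2) where
  toFun := Sum.elim (fun a => (0, a)) (fun a => (1, a))
  invFun := fun p => if p.1 = 0 then Sum.inl p.2 else Sum.inr p.2
  left_inv := by rintro (a | a) <;> simp
  right_inv := by
    rintro ⟨s, a⟩
    fin_cases s <;> simp

/-- the coordinate-extraction map -/
def Fmap : (Fin 2 × Fin 2 → ℝ) → (ℝ × ℝ) × (ℝ × ℝ) :=
  fun r => ((r (0,0), r (0,1)), (r (1,0), r (1,1)))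

lemma Fmap_eq : Fmap =
    (Prod.map (MeasurableEquiv.finTwoArrow (α := ℝ)) (MeasurableEquiv.finTwoArrow (α := ℝ))) ∘
      (MeasurableEquiv.sumPiEquivProdPi (fun _ : Fin 2 ⊕ Fin 2 => ℝ)) ∘
        (MeasurableEquiv.piCongrLeft (fun _ : Fin 2 × Fin 2 => ℝ) e0).symm := by
  funext r
  rfl

lemma Fmap_mp : MeasurePreserving Fmap
    (volume : Measure (Fin 2 × Fin 2 → ℝ)) (volume : Measure ((ℝ × ℝ) × (ℝ × ℝ))) := by
  rw [Fmap_eq]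
  exact ((volume_preserving_finTwoArrow ℝ).prod (volume_preserving_finTwoArrow ℝ)).comp
    ((volume_measurePreserving_sumPiEquivProdPi (fun _ : Fin 2 ⊕ Fin 2 => ℝ)).comp
      (volume_measurePreserving_piCongrLeft (fun _ : Fin 2 × Fin 2 => ℝ) e0).symm)

/-- base region: `u,x ∈ [-1,1]`, `x ≤ u` -/
def Dset : Set (ℝ × ℝ) := {p | p.1 ∈ Icc (-1:ℝ) 1 ∧ p.2 ∈ Icc (-1:ℝ) 1 ∧ p.2 ≤ p.1}

def B1' : Set ((ℝ × ℝ) × (ℝ × ℝ)) :=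
  {w | w.1 ∈ Dset ∧ (w.2.1 ∈ Icc (-1:ℝ) 1 ∧ w.2.2 ∈ Icc (-1:ℝ) 1 ∧ 2 * w.2.2 ≤ w.2.1 + w.1.1)}

def B2' : Set ((ℝ × ℝ) × (ℝ × ℝ)) :=
  {w | w.1 ∈ Dset ∧ (w.2.1 ∈ Icc (-1:ℝ) 1 ∧ w.2.2 ∈ Icc (-1:ℝ) 1 ∧ w.2.1 + w.1.1 ≤ 2 * w.2.2)}

lemma cube_inter1 : cube (Fin 2) (Fin 2) ∩
    {r : Fin 2 × Fin 2 → ℝ | r (0,1) ≤ r (0,0) ∧ 2 * r (1,1) ≤ r (1,0) + r (0,0)}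
    = Fmap ⁻¹' B1' := by
  ext r
  simp only [cube, Set.mem_inter_iff, Set.mem_setOf_eq, Set.mem_preimage, Fmap, B1', Dset,
    Set.mem_Icc]
  constructor
  · rintro ⟨hc, h1, h2⟩
    have h00 := abs_le.mp (hc (0,0))
    have h01 := abs_le.mp (hc (0,1))
    have h10 := abs_le.mp (hc (1,0))
    have h11 := abs_le.mp (hc (1,1))
    exact ⟨⟨h00, h01, h1⟩, h10, h11, h2⟩
  · rintro ⟨⟨h00, h01, h1⟩, h10, h11, h2⟩
    refine ⟨fun sa => ?_, h1, h2⟩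
    rcases sa with ⟨s, a⟩
    fin_cases s <;> fin_cases a <;> rw [abs_le]
    · exact h00
    · exact h01
    · exact h10
    · exact h11

lemma cube_inter2 : cube (Fin 2) (Fin 2) ∩
    {r : Fin 2 × Fin 2 → ℝ | r (0,1) ≤ r (0,0) ∧ r (1,0) + r (0,0) ≤ 2 * r (1,1)}
    = Fmap ⁻¹' B2' := by
  ext r
  simp only [cube, Set.mem_inter_iff, Set.mem_setOf_eq, Set.mem_preimage, Fmap, B2', Dset,
    Set.mem_Icc]
  constructor
  · rintro ⟨hc, h1, h2⟩
    have h00 := abs_le.mp (hc (0,0))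
    have h01 := abs_le.mp (hc (0,1))
    have h10 := abs_le.mp (hc (1,0))
    have h11 := abs_le.mp (hc (1,1))
    exact ⟨⟨h00, h01, h1⟩, h10, h11, h2⟩
  · rintro ⟨⟨h00, h01, h1⟩, h10, h11, h2⟩
    refine ⟨fun sa => ?_, h1, h2⟩
    rcases sa with ⟨s, a⟩
    fin_cases s <;> fin_cases a <;> rw [abs_le]
    · exact h00
    · exact h01
    · exact h10
    · exact h11

lemma measurable_Dset : MeasurableSet Dset := by
  unfold Dset
  apply MeasurableSet.inter
  · exact measurable_fst measurableSet_Icc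
  apply MeasurableSet.inter
  · exact measurable_snd measurableSet_Icc
  · exact measurableSet_le measurable_snd measurable_fst

lemma measurable_B1' : MeasurableSet B1' := by
  unfold B1' Dset
  refine MeasurableSet.inter ?_ (MeasurableSet.inter ?_ (MeasurableSet.inter ?_ ?_))
  · exact (measurable_fst.comp measurable_fst) measurableSet_Icc |>.inter
      (((measurable_snd.comp measurable_fst) measurableSet_Icc).inter
        (measurableSet_le (measurable_snd.comp measurable_fst) (measurable_fst.comp measurable_fst)))
  · exact (measurable_fst.comp measurable_snd) measurableSet_Icc
  · exact (measurable_snd.comp measurable_snd) measurableSet_Icc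
  · exact measurableSet_le (measurable_const.mul (measurable_snd.comp measurable_snd))
      ((measurable_fst.comp measurable_snd).add (measurable_fst.comp measurable_fst))

lemma measurable_B2' : MeasurableSet B2' := by
  unfold B2' Dset
  refine MeasurableSet.inter ?_ (MeasurableSet.inter ?_ (MeasurableSet.inter ?_ ?_))
  · exact (measurable_fst.comp measurable_fst) measurableSet_Icc |>.inter
      (((measurable_snd.comp measurable_fst) measurableSet_Icc).inter
        (measurableSet_le (measurable_snd.comp measurable_fst) (measurable_fst.comp measurable_fst)))
  · exact (measurable_fst.comp measurable_snd) measurableSet_Icc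
  · exact (measurable_snd.comp measurable_snd) measurableSet_Icc
  · exact measurableSet_le ((measurable_fst.comp measurable_snd).add (measurable_fst.comp measurable_fst))
      (measurable_const.mul (measurable_snd.comp measurable_snd))

end MeasSec

section VolSec
open MeasureTheory Set

lemma lint_Icc (f F : ℝ → ℝ) (c : ℝ) (hcont : Continuous f)
    (hnn : ∀ y ∈ Icc (-1:ℝ) 1, 0 ≤ f y) (hderiv : ∀ x : ℝ, HasDerivAt F (f x) x)
    (hval : F 1 - F (-1) = c) :
    ∫⁻ y in Icc (-1:ℝ) 1, ENNReal.ofReal (f y) = ENNReal.ofReal c := by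
  rw [← MeasureTheory.ofReal_integral_eq_lintegral_ofReal (hcont.integrableOn_Icc)
    ((ae_restrict_iff' measurableSet_Icc).mpr (Filter.Eventually.of_forall hnn))]
  congr 1
  rw [MeasureTheory.integral_Icc_eq_integral_Ioc,
    ← intervalIntegral.integral_of_le (by norm_num : (-1:ℝ) ≤ 1),
    intervalIntegral.integral_eq_sub_of_hasDerivAt (fun x _ => hderiv x)
      (hcont.intervalIntegrable _ _), hval]

lemma sliceA (u : ℝ) (hu : u ∈ Icc (-1:ℝ) 1) :
    (volume : Measure (ℝ × ℝ))
      {q : ℝ × ℝ | q.1 ∈ Icc (-1:ℝ) 1 ∧ q.2 ∈ Icc (-1:ℝ) 1 ∧ 2 * q.2 ≤ q.1 + u}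
      = ENNReal.ofReal (u + 2) := by
  obtain ⟨hu1, hu2⟩ := hu
  have hG : MeasurableSet {q : ℝ × ℝ | q.1 ∈ Icc (-1:ℝ) 1 ∧ q.2 ∈ Icc (-1:ℝ) 1 ∧ 2 * q.2 ≤ q.1 + u} := by
    refine (measurable_fst measurableSet_Icc).inter
      ((measurable_snd measurableSet_Icc).inter ?_)
    exact measurableSet_le (measurable_const.mul measurable_snd) (measurable_fst.add_const u)
  rw [MeasureTheory.Measure.volume_eq_prod, Measure.prod_apply hG]
  have hpt : ∀ y : ℝ, (volume : Measure ℝ) (Prod.mk y ⁻¹'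
        {q : ℝ × ℝ | q.1 ∈ Icc (-1:ℝ) 1 ∧ q.2 ∈ Icc (-1:ℝ) 1 ∧ 2 * q.2 ≤ q.1 + u})
      = (Icc (-1:ℝ) 1).indicator (fun y => ENNReal.ofReal ((y + u)/2 + 1)) y := by
    intro y
    by_cases hy : y ∈ Icc (-1:ℝ) 1
    · obtain ⟨hy1, hy2⟩ := hy
      have hset : Prod.mk y ⁻¹'
          {q : ℝ × ℝ | q.1 ∈ Icc (-1:ℝ) 1 ∧ q.2 ∈ Icc (-1:ℝ) 1 ∧ 2 * q.2 ≤ q.1 + u}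
          = Icc (-1) ((y + u)/2) := by
        ext z
        simp only [Set.mem_preimage, Set.mem_setOf_eq, Set.mem_Icc]
        constructor
        · rintro ⟨_, ⟨hz1, _⟩, hz⟩
          exact ⟨hz1, by linarith⟩
        · rintro ⟨hz1, hz2⟩
          exact ⟨⟨hy1, hy2⟩, ⟨hz1, by linarith⟩, by linarith⟩
      rw [hset, Real.volume_Icc, Set.indicator_of_mem (Set.mem_Icc.mpr ⟨hy1, hy2⟩)]
      congr 1
      ring
    · have hset : Prod.mk y ⁻¹'
          {q : ℝ × ℝ | q.1 ∈ Icc (-1:ℝ) 1 ∧ q.2 ∈ Icc (-1:ℝ) 1 ∧ 2 * q.2 ≤ q.1 + u} = ∅ := by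
        ext z
        simp only [Set.mem_preimage, Set.mem_setOf_eq, Set.mem_empty_iff_false, iff_false]
        rintro ⟨hy', _, _⟩
        exact hy hy'
      rw [hset, measure_empty, Set.indicator_of_notMem hy]
  rw [lintegral_congr hpt, lintegral_indicator measurableSet_Icc]
  refine lint_Icc _ (fun y => y^2/4 + (u/2 + 1) * y) _ (by fun_prop) (fun y hy => by
    obtain ⟨h1, _⟩ := hy; linarith) (fun x => ?_) (by ring)
  have h1 := (hasDerivAt_pow 2 x).div_const 4
  have h2 : HasDerivAt (fun y : ℝ => (u/2 + 1) * y) (u/2 + 1) x := by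
    simpa using (hasDerivAt_id x).const_mul (u/2 + 1)
  refine (h1.add h2).congr_deriv ?_
  push_cast
  ring

lemma sliceB (u : ℝ) (hu : u ∈ Icc (-1:ℝ) 1) :
    (volume : Measure (ℝ × ℝ))
      {q : ℝ × ℝ | q.1 ∈ Icc (-1:ℝ) 1 ∧ q.2 ∈ Icc (-1:ℝ) 1 ∧ q.1 + u ≤ 2 * q.2}
      = ENNReal.ofReal (2 - u) := by
  obtain ⟨hu1, hu2⟩ := hu
  have hG : MeasurableSet {q : ℝ × ℝ | q.1 ∈ Icc (-1:ℝ) 1 ∧ q.2 ∈ Icc (-1:ℝ) 1 ∧ q.1 + u ≤ 2 * q.2} := by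
    refine (measurable_fst measurableSet_Icc).inter
      ((measurable_snd measurableSet_Icc).inter ?_)
    exact measurableSet_le (measurable_fst.add_const u) (measurable_const.mul measurable_snd)
  rw [MeasureTheory.Measure.volume_eq_prod, Measure.prod_apply hG]
  have hpt : ∀ y : ℝ, (volume : Measure ℝ) (Prod.mk y ⁻¹'
        {q : ℝ × ℝ | q.1 ∈ Icc (-1:ℝ) 1 ∧ q.2 ∈ Icc (-1:ℝ) 1 ∧ q.1 + u ≤ 2 * q.2})
      = (Icc (-1:ℝ) 1).indicator (fun y => ENNReal.ofReal (1 - (y + u)/2)) y := by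
    intro y
    by_cases hy : y ∈ Icc (-1:ℝ) 1
    · obtain ⟨hy1, hy2⟩ := hy
      have hset : Prod.mk y ⁻¹'
          {q : ℝ × ℝ | q.1 ∈ Icc (-1:ℝ) 1 ∧ q.2 ∈ Icc (-1:ℝ) 1 ∧ q.1 + u ≤ 2 * q.2}
          = Icc ((y + u)/2) 1 := by
        ext z
        simp only [Set.mem_preimage, Set.mem_setOf_eq, Set.mem_Icc]
        constructor
        · rintro ⟨_, ⟨_, hz2⟩, hz⟩
          exact ⟨by linarith, hz2⟩
        · rintro ⟨hz1, hz2⟩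
          exact ⟨⟨hy1, hy2⟩, ⟨by linarith, hz2⟩, by linarith⟩
      rw [hset, Real.volume_Icc, Set.indicator_of_mem (Set.mem_Icc.mpr ⟨hy1, hy2⟩)]
    · have hset : Prod.mk y ⁻¹'
          {q : ℝ × ℝ | q.1 ∈ Icc (-1:ℝ) 1 ∧ q.2 ∈ Icc (-1:ℝ) 1 ∧ q.1 + u ≤ 2 * q.2} = ∅ := by
        ext z
        simp only [Set.mem_preimage, Set.mem_setOf_eq, Set.mem_empty_iff_false, iff_false]
        rintro ⟨hy', _, _⟩
        exact hy hy'
      rw [hset, measure_empty, Set.indicator_of_notMem hy]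
  rw [lintegral_congr hpt, lintegral_indicator measurableSet_Icc]
  refine lint_Icc _ (fun y => y - (y^2/4 + (u/2) * y)) _ (by fun_prop) (fun y hy => by
    obtain ⟨_, h2⟩ := hy; linarith) (fun x => ?_) (by ring)
  have h1 := (hasDerivAt_pow 2 x).div_const 4
  have h2 : HasDerivAt (fun y : ℝ => (u/2) * y) (u/2) x := by
    simpa using (hasDerivAt_id x).const_mul (u/2)
  have h3 := (hasDerivAt_id x).sub (h1.add h2)
  refine h3.congr_deriv ?_
  push_cast
  ring

end VolSec

section FinalSec
open MeasureTheory Set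

lemma vol_B1 : (volume : Measure ((ℝ × ℝ) × (ℝ × ℝ))) B1' = ENNReal.ofReal (14/3) := by
  rw [Measure.volume_eq_prod, Measure.prod_apply measurable_B1']
  have hpt : ∀ p : ℝ × ℝ, (volume : Measure (ℝ × ℝ)) (Prod.mk p ⁻¹' B1')
      = Dset.indicator (fun p => ENNReal.ofReal (p.1 + 2)) p := by
    intro p
    by_cases hp : p ∈ Dset
    · have hset : Prod.mk p ⁻¹' B1'
          = {q : ℝ × ℝ | q.1 ∈ Icc (-1:ℝ) 1 ∧ q.2 ∈ Icc (-1:ℝ) 1 ∧ 2 * q.2 ≤ q.1 + p.1} := by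
        ext q
        simp only [Set.mem_preimage, B1', Set.mem_setOf_eq, hp, true_and]
      rw [hset, sliceA p.1 hp.1, Set.indicator_of_mem hp]
    · have hset : Prod.mk p ⁻¹' B1' = ∅ := by
        ext q
        simp only [Set.mem_preimage, B1', Set.mem_setOf_eq, Set.mem_empty_iff_false, iff_false]
        rintro ⟨hp', _⟩
        exact hp hp'
      rw [hset, measure_empty, Set.indicator_of_notMem hp]
  rw [lintegral_congr hpt]
  have hmeas : Measurable (Dset.indicator fun p : ℝ × ℝ => ENNReal.ofReal (p.1 + 2)) :=
    Measurable.indicator ((measurable_fst.add_const 2).ennreal_ofReal) measurable_Dset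
  rw [Measure.volume_eq_prod, lintegral_prod _ hmeas.aemeasurable]
  have hin : ∀ u : ℝ, ∫⁻ x, Dset.indicator (fun p : ℝ × ℝ => ENNReal.ofReal (p.1 + 2)) (u, x)
      = (Icc (-1:ℝ) 1).indicator (fun u => ENNReal.ofReal ((u + 2) * (u + 1))) u := by
    intro u
    by_cases hu : u ∈ Icc (-1:ℝ) 1
    · have hfun : (fun x : ℝ => Dset.indicator (fun p : ℝ × ℝ => ENNReal.ofReal (p.1 + 2)) (u, x))
          = (Icc (-1:ℝ) u).indicator (fun _ => ENNReal.ofReal (u + 2)) := by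
        funext x
        by_cases hx : x ∈ Icc (-1:ℝ) u
        · have hx' : x ∈ Icc (-1:ℝ) 1 := ⟨hx.1, le_trans hx.2 hu.2⟩
          have hmem : (u, x) ∈ Dset := ⟨hu, hx', hx.2⟩
          rw [Set.indicator_of_mem hmem, Set.indicator_of_mem hx]
        · have hmem : (u, x) ∉ Dset := by
            intro hmem
            exact hx ⟨hmem.2.1.1, hmem.2.2⟩
          rw [Set.indicator_of_notMem hmem, Set.indicator_of_notMem hx]
      rw [hfun, lintegral_indicator_const measurableSet_Icc, Real.volume_Icc,
        Set.indicator_of_mem hu, ← ENNReal.ofReal_mul (by linarith [hu.1] : (0:ℝ) ≤ u + 2)]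
      congr 1
      ring
    · have hfun : (fun x : ℝ => Dset.indicator (fun p : ℝ × ℝ => ENNReal.ofReal (p.1 + 2)) (u, x))
          = fun _ => 0 := by
        funext x
        have hmem : (u, x) ∉ Dset := fun hmem => hu hmem.1
        rw [Set.indicator_of_notMem hmem]
      rw [hfun, lintegral_const, zero_mul, Set.indicator_of_notMem hu]
  rw [lintegral_congr hin, lintegral_indicator measurableSet_Icc]
  refine lint_Icc _ (fun u => u^3/3 + 3 * u^2/2 + 2*u) _ (by fun_prop)
    (fun u hu => by nlinarith [hu.1, hu.2]) (fun x => ?_) (by norm_num)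
  have h1 := (hasDerivAt_pow 3 x).div_const 3
  have h2 := ((hasDerivAt_pow 2 x).const_mul (3:ℝ)).div_const 2
  have h3 : HasDerivAt (fun y : ℝ => 2 * y) 2 x := by
    simpa using (hasDerivAt_id x).const_mul (2:ℝ)
  refine ((h1.add h2).add h3).congr_deriv ?_
  push_cast
  ring

lemma vol_B2 : (volume : Measure ((ℝ × ℝ) × (ℝ × ℝ))) B2' = ENNReal.ofReal (10/3) := by
  rw [Measure.volume_eq_prod, Measure.prod_apply measurable_B2']
  have hpt : ∀ p : ℝ × ℝ, (volume : Measure (ℝ × ℝ)) (Prod.mk p ⁻¹' B2')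
      = Dset.indicator (fun p => ENNReal.ofReal (2 - p.1)) p := by
    intro p
    by_cases hp : p ∈ Dset
    · have hset : Prod.mk p ⁻¹' B2'
          = {q : ℝ × ℝ | q.1 ∈ Icc (-1:ℝ) 1 ∧ q.2 ∈ Icc (-1:ℝ) 1 ∧ q.1 + p.1 ≤ 2 * q.2} := by
        ext q
        simp only [Set.mem_preimage, B2', Set.mem_setOf_eq, hp, true_and]
      rw [hset, sliceB p.1 hp.1, Set.indicator_of_mem hp]
    · have hset : Prod.mk p ⁻¹' B2' = ∅ := by
        ext q
        simp only [Set.mem_preimage, B2', Set.mem_setOf_eq, Set.mem_empty_iff_false, iff_false]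
        rintro ⟨hp', _⟩
        exact hp hp'
      rw [hset, measure_empty, Set.indicator_of_notMem hp]
  rw [lintegral_congr hpt]
  have hmeas : Measurable (Dset.indicator fun p : ℝ × ℝ => ENNReal.ofReal (2 - p.1)) :=
    Measurable.indicator ((measurable_const.sub measurable_fst).ennreal_ofReal) measurable_Dset
  rw [Measure.volume_eq_prod, lintegral_prod _ hmeas.aemeasurable]
  have hin : ∀ u : ℝ, ∫⁻ x, Dset.indicator (fun p : ℝ × ℝ => ENNReal.ofReal (2 - p.1)) (u, x)
      = (Icc (-1:ℝ) 1).indicator (fun u => ENNReal.ofReal ((2 - u) * (u + 1))) u := by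
    intro u
    by_cases hu : u ∈ Icc (-1:ℝ) 1
    · have hfun : (fun x : ℝ => Dset.indicator (fun p : ℝ × ℝ => ENNReal.ofReal (2 - p.1)) (u, x))
          = (Icc (-1:ℝ) u).indicator (fun _ => ENNReal.ofReal (2 - u)) := by
        funext x
        by_cases hx : x ∈ Icc (-1:ℝ) u
        · have hx' : x ∈ Icc (-1:ℝ) 1 := ⟨hx.1, le_trans hx.2 hu.2⟩
          have hmem : (u, x) ∈ Dset := ⟨hu, hx', hx.2⟩
          rw [Set.indicator_of_mem hmem, Set.indicator_of_mem hx]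
        · have hmem : (u, x) ∉ Dset := by
            intro hmem
            exact hx ⟨hmem.2.1.1, hmem.2.2⟩
          rw [Set.indicator_of_notMem hmem, Set.indicator_of_notMem hx]
      rw [hfun, lintegral_indicator_const measurableSet_Icc, Real.volume_Icc,
        Set.indicator_of_mem hu, ← ENNReal.ofReal_mul (by linarith [hu.2] : (0:ℝ) ≤ 2 - u)]
      congr 1
      ring
    · have hfun : (fun x : ℝ => Dset.indicator (fun p : ℝ × ℝ => ENNReal.ofReal (2 - p.1)) (u, x))
          = fun _ => 0 := by
        funext x
        have hmem : (u, x) ∉ Dset := fun hmem => hu hmem.1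
        rw [Set.indicator_of_notMem hmem]
      rw [hfun, lintegral_const, zero_mul, Set.indicator_of_notMem hu]
  rw [lintegral_congr hin, lintegral_indicator measurableSet_Icc]
  refine lint_Icc _ (fun u => 2*u + u^2/2 - u^3/3) _ (by fun_prop)
    (fun u hu => by nlinarith [hu.1, hu.2]) (fun x => ?_) (by norm_num)
  have h1 : HasDerivAt (fun y : ℝ => 2 * y) 2 x := by
    simpa using (hasDerivAt_id x).const_mul (2:ℝ)
  have h2 := (hasDerivAt_pow 2 x).div_const 2
  have h3 := (hasDerivAt_pow 3 x).div_const 3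
  refine ((h1.add h2).sub h3).congr_deriv ?_
  push_cast
  ring

end FinalSec


/-- there is a finite MDP without reward and two deterministic policies whose
OPT feasible sets intersected with the unit hypercube have different Lebesgue measures. -/
theorem statement0 :
    ∃ (nS nA : ℕ) (M : MDP (Fin nS) (Fin nA)) (d1 d2 : Fin nS → Fin nA),
      MeasureTheory.volume (cube (Fin nS) (Fin nA) ∩ ROPT M Set.univ d1) ≠
        MeasureTheory.volume (cube (Fin nS) (Fin nA) ∩ ROPT M Set.univ d2) := by
  refine ⟨2, 2, M0, (fun _ => 0), (fun s => s), ?_⟩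
  rw [ropt1_eq, ropt2_eq, cube_inter1, cube_inter2,
    Fmap_mp.measure_preimage measurable_B1'.nullMeasurableSet,
    Fmap_mp.measure_preimage measurable_B2'.nullMeasurableSet, vol_B1, vol_B2]
  intro h
  rw [ENNReal.ofReal_eq_ofReal_iff (by norm_num) (by norm_num)] at h
  norm_num at h
end

section
/- There exist a finite discounted MDP without reward M = (S, A, s0, p, γ), parameters λ > 0 and β > 0, and two stochastic policies π1, π2 with π_i(a|s) > 0 for all s, a, such that the |S|-dimensional Hausdorff measure in ℝ^{S×A} of [−1,+1]^{S×A} ∩ R^{MCE,S}_{M,π1} differs from that of [−1,+1]^{S×A} ∩ R^{MCE,S}_{M,π2}, and likewise the |S|-dimensional Hausdorff measure of [−1,+1]^{S×A} ∩ R^{BIRL,S}_{M,π1} differs from that of [−1,+1]^{S×A} ∩ R^{BIRL,S}_{M,π2}. -/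
open scoped ENNReal

open scoped BigOperators
open MeasureTheory

/-! ### Auxiliary construction for the proof -/

/-- A one-state, two-action MDP with discount 0. -/
noncomputable def Mex : MDP (Fin 1) (Fin 2) where
  s0 := 0
  p := fun _ _ _ => 1
  p_nonneg := fun _ _ _ => zero_le_one
  p_sum_one := fun _ _ => by simp
  disc := 0
  disc_nonneg := le_refl 0
  disc_lt_one := one_pos

lemma Mex_Qstar (r : Fin 1 × Fin 2 → ℝ) (s : Fin 1) (a : Fin 2) :
    Qstar Mex r s a = r (s, a) := by
  simp [Qstar, Mex]

lemma Mex_QstarSoft (lam : ℝ) (r : Fin 1 × Fin 2 → ℝ) (s : Fin 1) (a : Fin 2) :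
    QstarSoft Mex lam r s a = r (s, a) := by
  simp [QstarSoft, Mex]

/-- The common "softmax of the reward" condition. -/
def Scond (lam : ℝ) (π : Fin 1 → Fin 2 → ℝ) : Set (Fin 1 × Fin 2 → ℝ) :=
  {r | ∀ s a, π s a =
      Real.exp (r (s, a) / lam) / ∑ a', Real.exp (r (s, a') / lam)}

lemma RMCE_eq (lam : ℝ) (π : Fin 1 → Fin 2 → ℝ) : RMCE Mex lam π = Scond lam π := by
  ext r
  simp only [RMCE, Scond, Set.mem_setOf_eq, Mex_QstarSoft]

lemma RBIRL_eq (bet : ℝ) (π : Fin 1 → Fin 2 → ℝ) : RBIRL Mex bet π = Scond bet π := by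
  ext r
  simp only [RBIRL, Scond, Set.mem_setOf_eq, Mex_Qstar]

noncomputable def pi1 : Fin 1 → Fin 2 → ℝ := fun _ _ => 1 / 2

noncomputable def pi2 : Fin 1 → Fin 2 → ℝ := fun _ a =>
  if a = 0 then Real.exp 1 / (1 + Real.exp 1) else 1 / (1 + Real.exp 1)

lemma one_add_exp_pos : (0 : ℝ) < 1 + Real.exp 1 := by positivity

/-- Constant rewards in the cube lie in `Scond 3 pi1`. -/
lemma seg_subset :
    (fun t : ℝ => (fun _ => t : Fin 1 × Fin 2 → ℝ)) '' Set.Icc (-1 : ℝ) 1 ⊆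
      cube (Fin 1) (Fin 2) ∩ Scond 3 pi1 := by
  rintro r ⟨t, ht, rfl⟩
  constructor
  · intro sa
    rw [abs_le]
    exact ⟨ht.1, ht.2⟩
  · intro s a
    have hpos : (0 : ℝ) < Real.exp (t / 3) := Real.exp_pos _
    rw [Fin.sum_univ_two]
    show (1 : ℝ) / 2 = _
    rw [div_eq_div_iff two_ne_zero (by positivity)]
    ring

/-- `Scond 3 pi2` misses the cube. -/
lemma cube_inter_pi2 : cube (Fin 1) (Fin 2) ∩ Scond 3 pi2 = ∅ := by
  ext r
  simp only [Set.mem_inter_iff, Set.mem_empty_iff_false, iff_false, not_and]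
  intro hc hs
  have h0 := hs 0 0
  have h1 := hs 0 1
  rw [Fin.sum_univ_two] at h0 h1
  have hu : (0 : ℝ) < Real.exp (r (0, 0) / 3) := Real.exp_pos _
  have hv : (0 : ℝ) < Real.exp (r (0, 1) / 3) := Real.exp_pos _
  have hD : (0 : ℝ) < Real.exp (r (0, 0) / 3) + Real.exp (r (0, 1) / 3) := by linarith
  have hE1 : (0 : ℝ) < 1 + Real.exp 1 := one_add_exp_pos
  rw [show pi2 0 0 = Real.exp 1 / (1 + Real.exp 1) from rfl,
    div_eq_div_iff hE1.ne' hD.ne'] at h0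
  rw [show pi2 0 1 = 1 / (1 + Real.exp 1) from rfl,
    div_eq_div_iff hE1.ne' hD.ne'] at h1
  have huv : Real.exp (r (0, 0) / 3) = Real.exp 1 * Real.exp (r (0, 1) / 3) := by
    linear_combination -h0
  rw [← Real.exp_add] at huv
  have h3 := Real.exp_injective huv
  have hxb := (abs_le.mp (hc (0, 0))).2
  have hyb := (abs_le.mp (hc (0, 1))).1
  linarith

/-- The key measure computation. -/
lemma measures_ne (R1 R2 : Set (Fin 1 × Fin 2 → ℝ)) (h1 : R1 = Scond 3 pi1)
    (h2 : R2 = Scond 3 pi2) :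
    μH[((1 : ℕ) : ℝ)] (show Set (EuclideanSpace ℝ (Fin 1 × Fin 2)) from
        WithLp.ofLp ⁻¹' (cube (Fin 1) (Fin 2) ∩ R1)) ≠
      μH[((1 : ℕ) : ℝ)] (show Set (EuclideanSpace ℝ (Fin 1 × Fin 2)) from
        WithLp.ofLp ⁻¹' (cube (Fin 1) (Fin 2) ∩ R2)) := by
  subst h1 h2
  simp only [Nat.cast_one]
  have hz : μH[(1 : ℝ)] (show Set (EuclideanSpace ℝ (Fin 1 × Fin 2)) from
      WithLp.ofLp ⁻¹' (cube (Fin 1) (Fin 2) ∩ Scond 3 pi2)) = 0 := by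
    have he : (show Set (EuclideanSpace ℝ (Fin 1 × Fin 2)) from
        WithLp.ofLp ⁻¹' (cube (Fin 1) (Fin 2) ∩ Scond 3 pi2)) = ∅ := by
      rw [cube_inter_pi2, Set.preimage_empty]
    rw [he]
    exact measure_empty
  rw [hz]
  -- now show the first measure is nonzero
  set K : Set (EuclideanSpace ℝ (Fin 1 × Fin 2)) :=
    show Set (EuclideanSpace ℝ (Fin 1 × Fin 2)) from WithLp.ofLp ⁻¹' (cube (Fin 1) (Fin 2) ∩ Scond 3 pi1) with hK
  have hg : LipschitzWith 1 (fun r : EuclideanSpace ℝ (Fin 1 × Fin 2) => r (0, 0)) := by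
    have := (LipschitzWith.eval (α := fun _ : Fin 1 × Fin 2 => ℝ) ((0 : Fin 1), (0 : Fin 2))).comp
      (PiLp.lipschitzWith_ofLp 2 (fun _ : Fin 1 × Fin 2 => ℝ))
    rw [one_mul] at this
    exact this
  have himg : Set.Icc (-1 : ℝ) 1 ⊆ (fun r : EuclideanSpace ℝ (Fin 1 × Fin 2) => r (0, 0)) '' K := by
    intro t ht
    refine ⟨WithLp.toLp 2 (fun _ => t : Fin 1 × Fin 2 → ℝ), ?_, rfl⟩
    exact seg_subset ⟨t, ht, rfl⟩
  have h2le : (ENNReal.ofReal 2) ≤ μH[(1 : ℝ)] K := by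
    calc ENNReal.ofReal 2 = μH[(1 : ℝ)] (Set.Icc (-1 : ℝ) 1) := by
          rw [MeasureTheory.hausdorffMeasure_real, Real.volume_Icc]; norm_num
      _ ≤ μH[(1 : ℝ)] ((fun r : EuclideanSpace ℝ (Fin 1 × Fin 2) => r (0, 0)) '' K) :=
          measure_mono himg
      _ ≤ (1 : ℝ≥0∞) ^ (1 : ℝ) * μH[(1 : ℝ)] K :=
          hg.hausdorffMeasure_image_le zero_le_one K
      _ = μH[(1 : ℝ)] K := by simp
  intro h
  rw [h] at h2le
  simp at h2le

/-- there are a finite MDP without reward, λ, β > 0 and two stochastic policies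
whose MCE (resp. BIRL) feasible sets intersected with the unit hypercube have different
`|S|`-dimensional Hausdorff measures. -/
theorem statement1 :
    ∃ (nS nA : ℕ) (M : MDP (Fin nS) (Fin nA)) (lam bet : ℝ)
      (π1 π2 : Fin nS → Fin nA → ℝ),
      0 < lam ∧ 0 < bet ∧ IsPolicy π1 ∧ IsPolicy π2 ∧
      (∀ s a, 0 < π1 s a) ∧ (∀ s a, 0 < π2 s a) ∧
      μH[(nS : ℝ)] (show Set (EuclideanSpace ℝ (Fin nS × Fin nA)) from
          WithLp.ofLp ⁻¹' (cube (Fin nS) (Fin nA) ∩ RMCE M lam π1)) ≠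
        μH[(nS : ℝ)] (show Set (EuclideanSpace ℝ (Fin nS × Fin nA)) from
          WithLp.ofLp ⁻¹' (cube (Fin nS) (Fin nA) ∩ RMCE M lam π2)) ∧
      μH[(nS : ℝ)] (show Set (EuclideanSpace ℝ (Fin nS × Fin nA)) from
          WithLp.ofLp ⁻¹' (cube (Fin nS) (Fin nA) ∩ RBIRL M bet π1)) ≠
        μH[(nS : ℝ)] (show Set (EuclideanSpace ℝ (Fin nS × Fin nA)) from
          WithLp.ofLp ⁻¹' (cube (Fin nS) (Fin nA) ∩ RBIRL M bet π2)) := by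
  refine ⟨1, 2, Mex, 3, 3, pi1, pi2, by norm_num, by norm_num, ?_, ?_, ?_, ?_, ?_, ?_⟩
  · exact ⟨fun _ _ => by norm_num [pi1], fun s => by norm_num [pi1, Fin.sum_univ_two]⟩
  · refine ⟨fun s a => ?_, fun s => ?_⟩
    · by_cases h : a = 0 <;>
        simp [pi2, h] <;> positivity
    · have h := one_add_exp_pos
      simp [pi2, Fin.sum_univ_two]
      field_simp
      ring
  · intro s a
    simp [pi1]
  · intro s a
    by_cases h : a = 0 <;> simp [pi2, h] <;> positivity
  · exact measures_ne _ _ (RMCE_eq 3 pi1) (RMCE_eq 3 pi2)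
  · exact measures_ne _ _ (RBIRL_eq 3 pi1) (RBIRL_eq 3 pi2)
end

section
/- Fix λ > 0 and constants C1, C2 > 0. For any finite discounted MDP without reward M = (S, A, s0, p, γ) and any pair of stochastic policies π1, π2 with π1(a|s) ≥ π_min and π2(a|s) ≥ π_min for all (s,a) (for some π_min > 0), if C2 ≥ λ log(1/π_min), then the |S|-dimensional Hausdorff measure in ℝ^{S×A} of 𝒮R^{MCE}_M ∩ R^{MCE,S}_{M,π1} equals that of 𝒮R^{MCE}_M ∩ R^{MCE,S}_{M,π2}. -/
open scoped ENNReal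

open scoped BigOperators
open MeasureTheory

set_option linter.unusedSectionVars false

namespace Stmt4Aux

open Finset

variable {S A : Type} [Fintype S] [Fintype A] [DecidableEq S] [DecidableEq A]

/-- Row-stochastic matrix. -/
def RowStoch (P : Matrix S S ℝ) : Prop :=
  (∀ s s', 0 ≤ P s s') ∧ ∀ s, ∑ s', P s s' = 1

lemma mulVec_apply' (P : Matrix S S ℝ) (v : S → ℝ) (s : S) :
    P.mulVec v s = ∑ s', P s s' * v s' := rfl

lemma rowStoch_Pmat (M : MDP S A) {π : S → A → ℝ} (hπ : IsPolicy π) :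
    RowStoch (Pmat M π) := by
  constructor
  · intro s s'
    exact Finset.sum_nonneg fun a _ => mul_nonneg (hπ.1 s a) (M.p_nonneg s a s')
  · intro s
    calc ∑ s', Pmat M π s s' = ∑ s', ∑ a, π s a * M.p s a s' := rfl
      _ = ∑ a, ∑ s', π s a * M.p s a s' := Finset.sum_comm
      _ = ∑ a, π s a * ∑ s', M.p s a s' := by simp [Finset.mul_sum]
      _ = 1 := by simp [M.p_sum_one, hπ.2 s]

lemma rowStoch_one : RowStoch (1 : Matrix S S ℝ) := by
  constructor
  · intro s s'
    rw [Matrix.one_apply]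
    split <;> norm_num
  · intro s
    simp [Matrix.one_apply]

lemma rowStoch_mul {P Q : Matrix S S ℝ} (hP : RowStoch P) (hQ : RowStoch Q) :
    RowStoch (P * Q) := by
  constructor
  · intro s s'
    rw [Matrix.mul_apply]
    exact Finset.sum_nonneg fun k _ => mul_nonneg (hP.1 s k) (hQ.1 k s')
  · intro s
    calc ∑ s', (P * Q) s s' = ∑ s', ∑ k, P s k * Q k s' := by
          simp [Matrix.mul_apply]
      _ = ∑ k, ∑ s', P s k * Q k s' := Finset.sum_comm
      _ = ∑ k, P s k * ∑ s', Q k s' := by simp [Finset.mul_sum]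
      _ = 1 := by
          simp only [hQ.2]
          simpa using hP.2 s

lemma rowStoch_pow {P : Matrix S S ℝ} (hP : RowStoch P) (t : ℕ) : RowStoch (P ^ t) := by
  induction t with
  | zero => simpa using rowStoch_one
  | succ n ih => rw [pow_succ]; exact rowStoch_mul ih hP

lemma mulVec_mono {P : Matrix S S ℝ} (hP : RowStoch P) {v w : S → ℝ}
    (h : ∀ s, v s ≤ w s) (s : S) : P.mulVec v s ≤ P.mulVec w s :=
  Finset.sum_le_sum fun s' _ => mul_le_mul_of_nonneg_left (h s') (hP.1 s s')

lemma dot_prob_abs_le {p : S → ℝ} (hp0 : ∀ s', 0 ≤ p s') (hp1 : ∑ s', p s' = 1)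
    {v : S → ℝ} {B : ℝ} (hv : ∀ s', |v s'| ≤ B) : |∑ s', p s' * v s'| ≤ B := by
  calc |∑ s', p s' * v s'| ≤ ∑ s', |p s' * v s'| := Finset.abs_sum_le_sum_abs _ _
    _ = ∑ s', p s' * |v s'| := by
        refine Finset.sum_congr rfl fun s' _ => ?_
        rw [abs_mul, abs_of_nonneg (hp0 s')]
    _ ≤ ∑ s', p s' * B :=
        Finset.sum_le_sum fun s' _ => mul_le_mul_of_nonneg_left (hv s') (hp0 s')
    _ = B := by rw [← Finset.sum_mul, hp1, one_mul]

lemma abs_mulVec_le {P : Matrix S S ℝ} (hP : RowStoch P) {v : S → ℝ} {B : ℝ}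
    (h : ∀ s, |v s| ≤ B) (s : S) : |P.mulVec v s| ≤ B :=
  dot_prob_abs_le (hP.1 s) (hP.2 s) h

lemma bound_by_sum (g : S → ℝ) (s : S) : |g s| ≤ ∑ s', |g s'| :=
  Finset.single_le_sum (fun i _ => abs_nonneg (g i)) (Finset.mem_univ s)

lemma summable_series (M : MDP S A) {P : Matrix S S ℝ} (hP : RowStoch P)
    (g : S → ℝ) (s : S) :
    Summable (fun t : ℕ => M.disc ^ t * ((P ^ t).mulVec g) s) := by
  refine Summable.of_norm_bounded
    ((summable_geometric_of_lt_one M.disc_nonneg M.disc_lt_one).mul_left (∑ s', |g s'|)) fun t => ?_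
  have hb := abs_mulVec_le (rowStoch_pow hP t) (bound_by_sum g) s
  calc ‖M.disc ^ t * ((P ^ t).mulVec g) s‖
      = M.disc ^ t * |((P ^ t).mulVec g) s| := by
        rw [Real.norm_eq_abs, abs_mul, abs_of_nonneg (pow_nonneg M.disc_nonneg t)]
    _ ≤ M.disc ^ t * ∑ s', |g s'| :=
        mul_le_mul_of_nonneg_left hb (pow_nonneg M.disc_nonneg t)
    _ = (∑ s', |g s'|) * M.disc ^ t := mul_comm _ _

lemma telescope (M : MDP S A) {P : Matrix S S ℝ} (hP : RowStoch P) (V : S → ℝ) (s : S) :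
    HasSum (fun t : ℕ => M.disc ^ t *
      ((P ^ t).mulVec (fun s' => V s' - M.disc * P.mulVec V s')) s) (V s) := by
  set u : ℕ → ℝ := fun t => M.disc ^ t * ((P ^ t).mulVec V) s with hu
  have term_eq : ∀ t, M.disc ^ t *
      ((P ^ t).mulVec (fun s' => V s' - M.disc * P.mulVec V s')) s = u t - u (t + 1) := by
    intro t
    have h2 : ((P ^ (t + 1)).mulVec V) = (P ^ t).mulVec (P.mulVec V) := by
      rw [Matrix.mulVec_mulVec, ← pow_succ]
    have h1 : ((P ^ t).mulVec (fun s' => V s' - M.disc * P.mulVec V s')) s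
        = ((P ^ t).mulVec V) s - M.disc * ((P ^ (t + 1)).mulVec V) s := by
      rw [h2]
      set W := P.mulVec V with hW
      rw [mulVec_apply' (P ^ t) (fun s' => V s' - M.disc * W s'),
        mulVec_apply' (P ^ t) V, mulVec_apply' (P ^ t) W, Finset.mul_sum,
        ← Finset.sum_sub_distrib]
      exact Finset.sum_congr rfl fun s' _ => by ring
    rw [h1]
    simp only [hu, pow_succ]
    ring
  have hsum : Summable (fun t : ℕ => M.disc ^ t *
      ((P ^ t).mulVec (fun s' => V s' - M.disc * P.mulVec V s')) s) :=
    summable_series M hP _ s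
  rw [hsum.hasSum_iff_tendsto_nat]
  have hps : (fun n => ∑ i ∈ Finset.range n, M.disc ^ i *
      ((P ^ i).mulVec (fun s' => V s' - M.disc * P.mulVec V s')) s) = fun n => u 0 - u n := by
    funext n
    rw [Finset.sum_congr rfl fun i _ => term_eq i]
    exact Finset.sum_range_sub' u n
  have hu0 : u 0 = V s := by simp [hu, Matrix.one_mulVec]
  have hlim : Filter.Tendsto u Filter.atTop (nhds 0) := by
    have hg : Filter.Tendsto (fun n : ℕ => (∑ s', |V s'|) * M.disc ^ n) Filter.atTop (nhds 0) := by
      have := (tendsto_pow_atTop_nhds_zero_of_lt_one M.disc_nonneg M.disc_lt_one).const_mul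
        (∑ s', |V s'|)
      simpa using this
    refine squeeze_zero_norm (fun n => ?_) hg
    · have hb := abs_mulVec_le (rowStoch_pow hP n) (bound_by_sum V) s
      calc ‖u n‖ = M.disc ^ n * |((P ^ n).mulVec V) s| := by
            rw [Real.norm_eq_abs, hu, abs_mul, abs_of_nonneg (pow_nonneg M.disc_nonneg n)]
        _ ≤ M.disc ^ n * ∑ s', |V s'| :=
            mul_le_mul_of_nonneg_left hb (pow_nonneg M.disc_nonneg n)
        _ = (∑ s', |V s'|) * M.disc ^ n := mul_comm _ _
  rw [hps, hu0]
  simpa using Filter.Tendsto.sub (tendsto_const_nhds (x := V s)) hlim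

noncomputable def QV (M : MDP S A) (r : S × A → ℝ) (V : S → ℝ) (s : S) (a : A) : ℝ :=
  r (s, a) + M.disc * ∑ s', M.p s a s' * V s'

noncomputable def Top (M : MDP S A) (lam : ℝ) (r : S × A → ℝ) (V : S → ℝ) (s : S) : ℝ :=
  lam * Real.log (∑ a, Real.exp (QV M r V s a / lam))

lemma gibbs_le [Nonempty A] {lam : ℝ} (hlam : 0 < lam) {w x : A → ℝ}
    (hw0 : ∀ a, 0 ≤ w a) (hw1 : ∑ a, w a = 1) :
    ∑ a, w a * (x a - lam * Real.log (w a)) ≤ lam * Real.log (∑ a, Real.exp (x a / lam)) := by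
  set Z : ℝ := ∑ a, Real.exp (x a / lam) with hZ
  have hZpos : 0 < Z := Finset.sum_pos (fun a _ => Real.exp_pos _) Finset.univ_nonempty
  have key : ∀ a, w a * (x a - lam * Real.log (w a))
      ≤ lam * (Real.exp (x a / lam) / Z) - lam * w a + w a * (lam * Real.log Z) := by
    intro a
    rcases eq_or_lt_of_le (hw0 a) with h0 | hpos
    · rw [← h0]
      simp only [zero_mul, mul_zero, sub_zero, add_zero]
      positivity
    · have ht : 0 < Real.exp (x a / lam) / (w a * Z) := by positivity
      have hlog := Real.log_le_sub_one_of_pos ht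
      have hrw : Real.log (Real.exp (x a / lam) / (w a * Z))
          = x a / lam - Real.log (w a) - Real.log Z := by
        rw [Real.log_div (by positivity) (by positivity), Real.log_exp,
          Real.log_mul (ne_of_gt hpos) (ne_of_gt hZpos)]
        ring
      rw [hrw] at hlog
      have h2 := mul_le_mul_of_nonneg_left hlog
        (le_of_lt (by positivity : (0 : ℝ) < lam * w a))
      have e1 : lam * w a * (x a / lam - Real.log (w a) - Real.log Z)
          = w a * (x a - lam * Real.log (w a)) - w a * (lam * Real.log Z) := by
        field_simp
      have e2 : lam * w a * (Real.exp (x a / lam) / (w a * Z) - 1)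
          = lam * (Real.exp (x a / lam) / Z) - lam * w a := by
        field_simp
      rw [e1, e2] at h2
      linarith
  have hsum1 : ∑ a, Real.exp (x a / lam) / Z = 1 := by
    rw [← Finset.sum_div, ← hZ, div_self (ne_of_gt hZpos)]
  calc ∑ a, w a * (x a - lam * Real.log (w a))
      ≤ ∑ a, (lam * (Real.exp (x a / lam) / Z) - lam * w a + w a * (lam * Real.log Z)) :=
        Finset.sum_le_sum fun a _ => key a
    _ = lam * ∑ a, Real.exp (x a / lam) / Z - lam * ∑ a, w a
        + (∑ a, w a) * (lam * Real.log Z) := by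
        rw [Finset.sum_add_distrib, Finset.sum_sub_distrib, ← Finset.mul_sum, ← Finset.mul_sum,
          ← Finset.sum_mul]
    _ = lam * Real.log Z := by
        rw [hsum1, hw1]
        ring

lemma gibbs_eq [Nonempty A] {lam : ℝ} (hlam : 0 < lam) (x : A → ℝ) :
    ∑ a, (Real.exp (x a / lam) / ∑ a', Real.exp (x a' / lam)) *
      (x a - lam * Real.log (Real.exp (x a / lam) / ∑ a', Real.exp (x a' / lam)))
      = lam * Real.log (∑ a, Real.exp (x a / lam)) := by
  set Z : ℝ := ∑ a', Real.exp (x a' / lam) with hZ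
  have hZpos : 0 < Z := Finset.sum_pos (fun a _ => Real.exp_pos _) Finset.univ_nonempty
  have hlogw : ∀ a, Real.log (Real.exp (x a / lam) / Z) = x a / lam - Real.log Z := by
    intro a
    rw [Real.log_div (by positivity) (ne_of_gt hZpos), Real.log_exp]
  have hterm : ∀ a, x a - lam * (x a / lam - Real.log Z) = lam * Real.log Z := by
    intro a
    field_simp
    ring
  have hsum1 : ∑ a, Real.exp (x a / lam) / Z = 1 := by
    rw [← Finset.sum_div, ← hZ, div_self (ne_of_gt hZpos)]
  calc ∑ a, (Real.exp (x a / lam) / Z) * (x a - lam * Real.log (Real.exp (x a / lam) / Z))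
      = ∑ a, (Real.exp (x a / lam) / Z) * (lam * Real.log Z) := by
        refine Finset.sum_congr rfl fun a _ => ?_
        rw [hlogw a, hterm a]
    _ = (∑ a, Real.exp (x a / lam) / Z) * (lam * Real.log Z) := by rw [Finset.sum_mul]
    _ = lam * Real.log Z := by rw [hsum1, one_mul]

lemma lse_le_of_le [Nonempty A] {lam : ℝ} (hlam : 0 < lam) {x y : A → ℝ} {c : ℝ}
    (h : ∀ a, x a ≤ y a + c) :
    lam * Real.log (∑ a, Real.exp (x a / lam))
      ≤ lam * Real.log (∑ a, Real.exp (y a / lam)) + c := by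
  have h1 : ∑ a, Real.exp (x a / lam) ≤ (∑ a, Real.exp (y a / lam)) * Real.exp (c / lam) := by
    rw [Finset.sum_mul]
    refine Finset.sum_le_sum fun a _ => ?_
    rw [← Real.exp_add, ← add_div]
    refine Real.exp_le_exp.2 ?_
    rw [div_eq_mul_inv, div_eq_mul_inv]
    exact mul_le_mul_of_nonneg_right (h a) (by positivity)
  have hx : 0 < ∑ a, Real.exp (x a / lam) :=
    Finset.sum_pos (fun a _ => Real.exp_pos _) Finset.univ_nonempty
  have hy : 0 < ∑ a, Real.exp (y a / lam) :=
    Finset.sum_pos (fun a _ => Real.exp_pos _) Finset.univ_nonempty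
  have h2 := Real.log_le_log hx h1
  rw [Real.log_mul (ne_of_gt hy) (ne_of_gt (Real.exp_pos _)), Real.log_exp] at h2
  have h3 := mul_le_mul_of_nonneg_left h2 (le_of_lt hlam)
  calc lam * Real.log (∑ a, Real.exp (x a / lam))
      ≤ lam * (Real.log (∑ a, Real.exp (y a / lam)) + c / lam) := h3
    _ = lam * Real.log (∑ a, Real.exp (y a / lam)) + c := by
        rw [mul_add, mul_div_cancel₀ _ (ne_of_gt hlam)]

lemma top_contract (M : MDP S A) [Nonempty A] {lam : ℝ} (hlam : 0 < lam) (r : S × A → ℝ) :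
    ContractingWith ⟨M.disc, M.disc_nonneg⟩ (Top M lam r) := by
  refine ⟨by exact_mod_cast M.disc_lt_one, LipschitzWith.of_dist_le_mul fun V W => ?_⟩
  show dist (Top M lam r V) (Top M lam r W) ≤ M.disc * dist V W
  rw [dist_pi_le_iff (mul_nonneg M.disc_nonneg dist_nonneg)]
  intro s
  have hq : ∀ a, |QV M r V s a - QV M r W s a| ≤ M.disc * dist V W := by
    intro a
    have : QV M r V s a - QV M r W s a
        = M.disc * ∑ s', M.p s a s' * (V s' - W s') := by
      simp only [QV, mul_sub, Finset.sum_sub_distrib]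
      ring
    rw [this, abs_mul, abs_of_nonneg M.disc_nonneg]
    refine mul_le_mul_of_nonneg_left ?_ M.disc_nonneg
    refine dot_prob_abs_le (M.p_nonneg s a) (M.p_sum_one s a) fun s' => ?_
    rw [← Real.dist_eq]
    exact dist_le_pi_dist V W s'
  have hTV : Top M lam r V s = lam * Real.log (∑ a, Real.exp (QV M r V s a / lam)) := rfl
  have hTW : Top M lam r W s = lam * Real.log (∑ a, Real.exp (QV M r W s a / lam)) := rfl
  have hVW : lam * Real.log (∑ a, Real.exp (QV M r V s a / lam))
      ≤ lam * Real.log (∑ a, Real.exp (QV M r W s a / lam)) + M.disc * dist V W :=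
    lse_le_of_le hlam fun a => by linarith [(abs_le.1 (hq a)).1, (abs_le.1 (hq a)).2]
  have hWV : lam * Real.log (∑ a, Real.exp (QV M r W s a / lam))
      ≤ lam * Real.log (∑ a, Real.exp (QV M r V s a / lam)) + M.disc * dist V W :=
    lse_le_of_le hlam fun a => by linarith [(abs_le.1 (hq a)).1, (abs_le.1 (hq a)).2]
  rw [Real.dist_eq, abs_le]
  constructor
  · linarith
  · linarith

lemma g_add_PV (M : MDP S A) (π : S → A → ℝ) (lam : ℝ) (r : S × A → ℝ) (V : S → ℝ) (s : S) :
    (∑ a, π s a * (r (s, a) - lam * Real.log (π s a))) + M.disc * (Pmat M π).mulVec V s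
      = ∑ a, π s a * (QV M r V s a - lam * Real.log (π s a)) := by
  have hstep : M.disc * (Pmat M π).mulVec V s
      = ∑ a, π s a * (M.disc * ∑ s', M.p s a s' * V s') := by
    calc M.disc * (Pmat M π).mulVec V s
        = ∑ s', ∑ a, M.disc * (π s a * M.p s a s' * V s') := by
          rw [mulVec_apply', Finset.mul_sum]
          refine Finset.sum_congr rfl fun s' _ => ?_
          rw [show Pmat M π s s' = ∑ a, π s a * M.p s a s' from rfl, Finset.sum_mul,
            Finset.mul_sum]
      _ = ∑ a, ∑ s', M.disc * (π s a * M.p s a s' * V s') := Finset.sum_comm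
      _ = ∑ a, π s a * (M.disc * ∑ s', M.p s a s' * V s') := by
          refine Finset.sum_congr rfl fun a _ => ?_
          rw [Finset.mul_sum, Finset.mul_sum]
          exact Finset.sum_congr rfl fun s' _ => by ring
  rw [hstep, ← Finset.sum_add_distrib]
  refine Finset.sum_congr rfl fun a _ => ?_
  simp only [QV]
  ring

lemma vpisoft_le (M : MDP S A) [Nonempty A] {lam : ℝ} (hlam : 0 < lam) (r : S × A → ℝ)
    {V : S → ℝ} (hfix : Top M lam r V = V) {π : S → A → ℝ} (hπ : IsPolicy π) (s : S) :
    VpiSoft M lam π r s ≤ V s := by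
  set g : S → ℝ := fun s' => ∑ a, π s' a * (r (s', a) - lam * Real.log (π s' a)) with hg
  have hP := rowStoch_Pmat M hπ
  have hgle : ∀ s', g s' ≤ V s' - M.disc * (Pmat M π).mulVec V s' := by
    intro s'
    have h1 := g_add_PV M π lam r V s'
    have h2 : ∑ a, π s' a * (QV M r V s' a - lam * Real.log (π s' a)) ≤ V s' := by
      calc ∑ a, π s' a * (QV M r V s' a - lam * Real.log (π s' a))
          ≤ lam * Real.log (∑ a, Real.exp (QV M r V s' a / lam)) :=
            gibbs_le hlam (hπ.1 s') (hπ.2 s')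
        _ = Top M lam r V s' := rfl
        _ = V s' := by rw [hfix]
    rw [← h1] at h2
    linarith
  have hsum1 : Summable (fun t : ℕ => M.disc ^ t * ((Pmat M π ^ t).mulVec g) s) :=
    summable_series M hP g s
  have htel := telescope M hP V s
  have hle : ∀ t : ℕ, M.disc ^ t * ((Pmat M π ^ t).mulVec g) s
      ≤ M.disc ^ t *
        ((Pmat M π ^ t).mulVec (fun s' => V s' - M.disc * (Pmat M π).mulVec V s')) s :=
    fun t => mul_le_mul_of_nonneg_left (mulVec_mono (rowStoch_pow hP t) hgle s)
      (pow_nonneg M.disc_nonneg t)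
  calc VpiSoft M lam π r s = ∑' t : ℕ, M.disc ^ t * ((Pmat M π ^ t).mulVec g) s := rfl
    _ ≤ ∑' t : ℕ, M.disc ^ t *
        ((Pmat M π ^ t).mulVec (fun s' => V s' - M.disc * (Pmat M π).mulVec V s')) s :=
        Summable.tsum_le_tsum hle hsum1 htel.summable
    _ = V s := htel.tsum_eq

noncomputable def softmaxPol (M : MDP S A) (lam : ℝ) (r : S × A → ℝ) (V : S → ℝ) :
    S → A → ℝ :=
  fun s a => Real.exp (QV M r V s a / lam) / ∑ a', Real.exp (QV M r V s a' / lam)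

lemma softmaxPol_isPolicy (M : MDP S A) [Nonempty A] (lam : ℝ) (r : S × A → ℝ) (V : S → ℝ) :
    IsPolicy (softmaxPol M lam r V) := by
  constructor
  · intro s a
    have hZ : 0 < ∑ a', Real.exp (QV M r V s a' / lam) :=
      Finset.sum_pos (fun a _ => Real.exp_pos _) Finset.univ_nonempty
    exact div_nonneg (Real.exp_pos _).le hZ.le
  · intro s
    have hZ : 0 < ∑ a', Real.exp (QV M r V s a' / lam) :=
      Finset.sum_pos (fun a _ => Real.exp_pos _) Finset.univ_nonempty
    have hsd : (∑ a, softmaxPol M lam r V s a)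
        = (∑ a, Real.exp (QV M r V s a / lam)) / ∑ a', Real.exp (QV M r V s a' / lam) := by
      rw [Finset.sum_div]
      rfl
    rw [hsd]
    exact div_self (ne_of_gt hZ)

lemma vpisoft_softmax (M : MDP S A) [Nonempty A] {lam : ℝ} (hlam : 0 < lam) (r : S × A → ℝ)
    {V : S → ℝ} (hfix : Top M lam r V = V) (s : S) :
    VpiSoft M lam (softmaxPol M lam r V) r s = V s := by
  set π := softmaxPol M lam r V with hπdef
  have hπ := softmaxPol_isPolicy M lam r V
  have hgeq : (fun s' => ∑ a, π s' a * (r (s', a) - lam * Real.log (π s' a)))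
      = fun s' => V s' - M.disc * (Pmat M π).mulVec V s' := by
    funext s'
    have h1 := g_add_PV M π lam r V s'
    have h2 : ∑ a, π s' a * (QV M r V s' a - lam * Real.log (π s' a)) = V s' := by
      calc ∑ a, π s' a * (QV M r V s' a - lam * Real.log (π s' a))
          = lam * Real.log (∑ a, Real.exp (QV M r V s' a / lam)) := by
            have := gibbs_eq (A := A) hlam (fun a => QV M r V s' a)
            simpa [hπdef, softmaxPol] using this
        _ = Top M lam r V s' := rfl
        _ = V s' := by rw [hfix]
    rw [← h1] at h2
    linarith
  have : VpiSoft M lam π r s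
      = ∑' t : ℕ, M.disc ^ t *
        ((Pmat M π ^ t).mulVec (fun s' => V s' - M.disc * (Pmat M π).mulVec V s')) s := by
    rw [VpiSoft, hgeq]
  rw [this]
  exact (telescope M (rowStoch_Pmat M hπ) V s).tsum_eq

lemma vstarSoft_eq (M : MDP S A) [Nonempty A] {lam : ℝ} (hlam : 0 < lam) (r : S × A → ℝ)
    {V : S → ℝ} (hfix : Top M lam r V = V) : VstarSoft M lam r = V := by
  funext s
  have hbdd : BddAbove (Set.range fun π : {π : S → A → ℝ // IsPolicy π} =>
      VpiSoft M lam π.1 r s) := by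
    refine ⟨V s, ?_⟩
    rintro y ⟨π, rfl⟩
    exact vpisoft_le M hlam r hfix π.2 s
  have hne : Nonempty {π : S → A → ℝ // IsPolicy π} :=
    ⟨⟨softmaxPol M lam r V, softmaxPol_isPolicy M lam r V⟩⟩
  apply le_antisymm
  · exact ciSup_le fun π => vpisoft_le M hlam r hfix π.2 s
  · exact le_ciSup_of_le hbdd ⟨softmaxPol M lam r V, softmaxPol_isPolicy M lam r V⟩
      (le_of_eq (vpisoft_softmax M hlam r hfix s).symm)

lemma vstarSoft_fix (M : MDP S A) [Nonempty A] {lam : ℝ} (hlam : 0 < lam) (r : S × A → ℝ) :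
    Top M lam r (VstarSoft M lam r) = VstarSoft M lam r := by
  obtain ⟨V, hV⟩ : ∃ V : S → ℝ, Top M lam r V = V :=
    ⟨_, (top_contract M hlam r).fixedPoint_isFixedPt⟩
  rw [vstarSoft_eq M hlam r hV, hV]

lemma qstarSoft_eq_QV (M : MDP S A) (lam : ℝ) (r : S × A → ℝ) (s : S) (a : A) :
    QstarSoft M lam r s a = QV M r (VstarSoft M lam r) s a := rfl

lemma mem_shift (M : MDP S A) [Nonempty A] {lam C1 C2 : ℝ} (hlam : 0 < lam)
    {π1 π2 : S → A → ℝ} (hp1 : IsPolicy π1) (hp2 : IsPolicy π2)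
    {πmin : ℝ} (hπmin : 0 < πmin) (hlb1 : ∀ s a, πmin ≤ π1 s a) (hlb2 : ∀ s a, πmin ≤ π2 s a)
    (hC2' : lam * Real.log (1 / πmin) ≤ C2)
    {r : S × A → ℝ} (hr : r ∈ SRMCE M lam C1 C2 ∩ RMCE M lam π1) :
    (r + fun sa => lam * (Real.log (π2 sa.1 sa.2) - Real.log (π1 sa.1 sa.2)))
      ∈ SRMCE M lam C1 C2 ∩ RMCE M lam π2 := by
  set c : S × A → ℝ := fun sa => lam * (Real.log (π2 sa.1 sa.2) - Real.log (π1 sa.1 sa.2))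
    with hc
  have hfix : Top M lam r (VstarSoft M lam r) = VstarSoft M lam r := vstarSoft_fix M hlam r
  set V : S → ℝ := VstarSoft M lam r with hV
  have hQ : ∀ s a, QstarSoft M lam r s a = V s + lam * Real.log (π1 s a) := by
    intro s a
    have h1 := hr.2 s a
    have hZpos : 0 < ∑ a', Real.exp (QstarSoft M lam r s a' / lam) :=
      Finset.sum_pos (fun a _ => Real.exp_pos _) Finset.univ_nonempty
    have hZ : (∑ a', Real.exp (QstarSoft M lam r s a' / lam)) = Real.exp (V s / lam) := by
      have h2 : V s = lam * Real.log (∑ a', Real.exp (QstarSoft M lam r s a' / lam)) :=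
        (congrFun hfix s).symm
      rw [← Real.exp_log hZpos]
      congr 1
      rw [h2]
      field_simp
    rw [hZ] at h1
    have h3 : π1 s a = Real.exp ((QstarSoft M lam r s a - V s) / lam) := by
      rw [h1, ← Real.exp_sub]
      congr 1
      ring
    have hlog : Real.log (π1 s a) = (QstarSoft M lam r s a - V s) / lam := by
      rw [h3, Real.log_exp]
    rw [hlog]
    field_simp
    ring
  have hQ' : ∀ s a, QV M (r + c) V s a = V s + lam * Real.log (π2 s a) := by
    intro s a
    have hsplit : QV M (r + c) V s a = QV M r V s a + c (s, a) := by
      simp only [QV, Pi.add_apply]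
      ring
    have hQv : QV M r V s a = QstarSoft M lam r s a := by rw [qstarSoft_eq_QV, hV]
    rw [hsplit, hQv, hQ s a, hc]
    ring
  have hexp' : ∀ s a, Real.exp (QV M (r + c) V s a / lam)
      = Real.exp (V s / lam) * π2 s a := by
    intro s a
    rw [hQ' s a, add_div, Real.exp_add, mul_div_cancel_left₀ _ (ne_of_gt hlam),
      Real.exp_log (lt_of_lt_of_le hπmin (hlb2 s a))]
  have hfix' : Top M lam (r + c) V = V := by
    funext s
    show lam * Real.log (∑ a, Real.exp (QV M (r + c) V s a / lam)) = V s
    rw [Finset.sum_congr rfl fun a _ => hexp' s a, ← Finset.mul_sum, hp2.2 s, mul_one,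
      Real.log_exp, mul_div_cancel₀ _ (ne_of_gt hlam)]
  have hVs' : VstarSoft M lam (r + c) = V := vstarSoft_eq M hlam _ hfix'
  have hQs' : ∀ s a, QstarSoft M lam (r + c) s a = V s + lam * Real.log (π2 s a) := by
    intro s a
    rw [qstarSoft_eq_QV, hVs', hQ' s a]
  constructor
  · intro s a
    refine ⟨by rw [hVs']; exact (hr.1 s a).1, ?_⟩
    have hA : AstarSoft M lam (r + c) s a = lam * Real.log (π2 s a) := by
      rw [AstarSoft, hQs' s a]
      show V s + lam * Real.log (π2 s a) - VstarSoft M lam (r + c) s = _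
      rw [hVs']
      ring
    rw [hA]
    have hpos : 0 < π2 s a := lt_of_lt_of_le hπmin (hlb2 s a)
    have hle1 : π2 s a ≤ 1 := by
      have := Finset.single_le_sum (fun a' _ => hp2.1 s a') (Finset.mem_univ a)
      rwa [hp2.2 s] at this
    rw [abs_mul, abs_of_pos hlam, abs_of_nonpos (Real.log_nonpos (le_of_lt hpos) hle1)]
    have hmono : Real.log πmin ≤ Real.log (π2 s a) := Real.log_le_log hπmin (hlb2 s a)
    calc lam * -Real.log (π2 s a) ≤ lam * -Real.log πmin := by nlinarith
      _ = lam * Real.log (1 / πmin) := by rw [one_div, Real.log_inv]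
      _ ≤ C2 := hC2'
  · intro s a
    have hexp'' : ∀ a', Real.exp (QstarSoft M lam (r + c) s a' / lam)
        = Real.exp (V s / lam) * π2 s a' := by
      intro a'
      rw [qstarSoft_eq_QV, hVs']
      exact hexp' s a'
    show π2 s a = _
    rw [Finset.sum_congr rfl fun a' _ => hexp'' a', ← Finset.mul_sum, hp2.2 s, mul_one,
      hexp'' a, mul_comm, mul_div_assoc, div_self (Real.exp_ne_zero _), mul_one]

end Stmt4Aux

set_option maxHeartbeats 1000000 in
/-- the `|S|`-dimensional Hausdorff measure of `𝒮R^{MCE}_M ∩ R^{MCE,S}_{M,π}`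
does not depend on the policy `π` (among policies bounded below by `π_min`). -/
theorem statement4 {S A : Type} [Fintype S] [Fintype A] [DecidableEq S] [DecidableEq A]
    (lam C1 C2 : ℝ) (hlam : 0 < lam) (hC1 : 0 < C1) (hC2 : 0 < C2)
    (M : MDP S A) (π1 π2 : S → A → ℝ) (hp1 : IsPolicy π1) (hp2 : IsPolicy π2)
    (πmin : ℝ) (hπmin : 0 < πmin)
    (hlb1 : ∀ s a, πmin ≤ π1 s a) (hlb2 : ∀ s a, πmin ≤ π2 s a)
    (hC2' : lam * Real.log (1 / πmin) ≤ C2) :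
    μH[(Fintype.card S : ℝ)] (show Set (EuclideanSpace ℝ (S × A)) from
        WithLp.ofLp ⁻¹' (SRMCE M lam C1 C2 ∩ RMCE M lam π1)) =
      μH[(Fintype.card S : ℝ)] (show Set (EuclideanSpace ℝ (S × A)) from
        WithLp.ofLp ⁻¹' (SRMCE M lam C1 C2 ∩ RMCE M lam π2)) := by
  classical
  rcases isEmpty_or_nonempty S with hS | hS
  · have h1 : ∀ π : S → A → ℝ, RMCE M lam π = Set.univ := by
      intro π
      ext r
      simp only [RMCE, Set.mem_setOf_eq, Set.mem_univ, iff_true]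
      exact fun s => (hS.false s).elim
    rw [show (SRMCE M lam C1 C2 ∩ RMCE M lam π1 : Set (S × A → ℝ))
        = SRMCE M lam C1 C2 ∩ RMCE M lam π2 from by rw [h1 π1, h1 π2]]
  · have hA : Nonempty A := by
      rcases isEmpty_or_nonempty A with hA | hA
      · exfalso
        have := hp1.2 (Classical.arbitrary S)
        simp at this
      · exact hA
    obtain ⟨c, hc⟩ : ∃ c : S × A → ℝ,
        c = fun sa => lam * (Real.log (π2 sa.1 sa.2) - Real.log (π1 sa.1 sa.2)) := ⟨_, rfl⟩
    have hset : (SRMCE M lam C1 C2 ∩ RMCE M lam π2 : Set (S × A → ℝ))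
        = (fun r => r + c) '' (SRMCE M lam C1 C2 ∩ RMCE M lam π1) := by
      apply Set.Subset.antisymm
      · intro r' hr'
        have hmem := Stmt4Aux.mem_shift M hlam hp2 hp1 hπmin hlb2 hlb1 hC2' hr'
        rw [Set.mem_image]
        refine ⟨_, hmem, ?_⟩
        funext sa
        simp only [Pi.add_apply, hc]
        ring
      · intro r' hr'
        rw [Set.mem_image] at hr'
        obtain ⟨r, hr, rfl⟩ := hr'
        show r + c ∈ _
        rw [hc]
        exact Stmt4Aux.mem_shift M hlam hp1 hp2 hπmin hlb1 hlb2 hC2' hr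
    have hiso : Isometry (fun x : EuclideanSpace ℝ (S × A) => x + WithLp.toLp 2 c) :=
      isometry_add_right _
    have himg := hiso.hausdorffMeasure_image
      (Or.inl (by positivity : (0 : ℝ) ≤ (Fintype.card S : ℝ)))
      (show Set (EuclideanSpace ℝ (S × A)) from WithLp.ofLp ⁻¹' (SRMCE M lam C1 C2 ∩ RMCE M lam π1))
    rw [show (show Set (EuclideanSpace ℝ (S × A)) from WithLp.ofLp ⁻¹' (SRMCE M lam C1 C2 ∩ RMCE M lam π2))
        = (fun x : EuclideanSpace ℝ (S × A) => x + WithLp.toLp 2 c) ''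
          (show Set (EuclideanSpace ℝ (S × A)) from WithLp.ofLp ⁻¹' (SRMCE M lam C1 C2 ∩ RMCE M lam π1))
        from by
          rw [hset]
          ext ⟨x⟩
          simp only [Set.mem_preimage, Set.mem_image]
          constructor
          · rintro ⟨r, hr, hrx⟩
            refine ⟨WithLp.toLp 2 r, hr, ?_⟩
            simp [← hrx]
          · rintro ⟨y, hy, hyx⟩
            refine ⟨WithLp.ofLp y, hy, ?_⟩
            have h := congrArg WithLp.ofLp hyx
            simpa using h]
    exact himg.symm
end

section
/- Let F ⊆ ℝ^{S×A} be a set equipped with a measure μ, let w : ℝ^{S×A} → [0,1] be measurable with ∫_F w(r)·(1 + ‖r‖) dμ(r) < ∞, and let M' = (S, A, s0', p', γ') be a finite discounted MDP without reward with cost c ∈ ℝ^{S×A} and budget k ≥ 0 such that Π_{c,k} ≠ ∅. Then the set of minimizers over π' ∈ Π_{c,k} of ∫_F w(r) (max_{π ∈ Π_{c,k}} V^π(s0'; p', r) − V^{π'}(s0'; p', r)) dμ(r) coincides with the set of maximizers over π' ∈ Π_{c,k} of V^{π'}(s0'; p', r_w), where r_w ∈ ℝ^{S×A} is defined componentwise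 by r_w(s,a) := ∫_F w(r) r(s,a) dμ(r). -/
open scoped ENNReal

open scoped BigOperators
open MeasureTheory

set_option linter.unusedSectionVars false

section Aux

variable {S A : Type} [Fintype S] [Fintype A] [DecidableEq S] [DecidableEq A]

/-- A row-stochastic matrix. -/
def IsStoch (P : Matrix S S ℝ) : Prop :=
  (∀ s s', 0 ≤ P s s') ∧ ∀ s, ∑ s', P s s' = 1

lemma isStoch_mul {P Q : Matrix S S ℝ} (hP : IsStoch P) (hQ : IsStoch Q) :
    IsStoch (P * Q) := by
  constructor
  · intro s s'
    rw [Matrix.mul_apply]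
    exact Finset.sum_nonneg fun j _ => mul_nonneg (hP.1 s j) (hQ.1 j s')
  · intro s
    simp only [Matrix.mul_apply]
    rw [Finset.sum_comm]
    calc ∑ j, ∑ s', P s j * Q j s' = ∑ j, P s j * ∑ s', Q j s' := by
          simp [Finset.mul_sum]
      _ = ∑ j, P s j := by simp [hQ.2]
      _ = 1 := hP.2 s

lemma isStoch_pow {P : Matrix S S ℝ} (hP : IsStoch P) (t : ℕ) : IsStoch (P ^ t) := by
  induction t with
  | zero =>
      constructor
      · intro s s'
        simp only [pow_zero, Matrix.one_apply]
        split <;> norm_num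
      · intro s; simp [pow_zero, Matrix.one_apply]
  | succ n ih => rw [pow_succ]; exact isStoch_mul ih hP

lemma isStoch_Pmat (M : MDP S A) {π : S → A → ℝ} (hπ : IsPolicy π) :
    IsStoch (Pmat M π) := by
  constructor
  · intro s s'
    exact Finset.sum_nonneg fun a _ => mul_nonneg (hπ.1 s a) (M.p_nonneg s a s')
  · intro s
    unfold Pmat
    simp only [Matrix.of_apply]
    rw [Finset.sum_comm]
    calc ∑ a, ∑ s', π s a * M.p s a s' = ∑ a, π s a * ∑ s', M.p s a s' := by
          simp [Finset.mul_sum]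
      _ = ∑ a, π s a := by simp [M.p_sum_one]
      _ = 1 := hπ.2 s

lemma isStoch_entry_le_one {P : Matrix S S ℝ} (hP : IsStoch P) (s s' : S) : P s s' ≤ 1 := by
  calc P s s' ≤ ∑ j, P s j :=
        Finset.single_le_sum (fun j _ => hP.1 s j) (Finset.mem_univ s')
    _ = 1 := hP.2 s

lemma pol_le_one {π : S → A → ℝ} (hπ : IsPolicy π) (s : S) (a : A) : π s a ≤ 1 := by
  calc π s a ≤ ∑ a', π s a' :=
        Finset.single_le_sum (fun a' _ => hπ.1 s a') (Finset.mem_univ a)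
    _ = 1 := hπ.2 s

/-- Coefficients of the value function as a linear functional of the reward. -/
noncomputable def Vcoef (M : MDP S A) (π : S → A → ℝ) (s : S) (sa : S × A) : ℝ :=
  ∑' t : ℕ, M.disc ^ t * (Pmat M π ^ t) s sa.1 * π sa.1 sa.2

lemma Vcoef_summable (M : MDP S A) {π : S → A → ℝ} (hπ : IsPolicy π) (s : S) (sa : S × A) :
    Summable fun t : ℕ => M.disc ^ t * (Pmat M π ^ t) s sa.1 * π sa.1 sa.2 := by
  refine Summable.of_nonneg_of_le (fun t => ?_) (fun t => ?_)
      (summable_geometric_of_lt_one M.disc_nonneg M.disc_lt_one)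
  · exact mul_nonneg (mul_nonneg (pow_nonneg M.disc_nonneg t)
      ((isStoch_pow (isStoch_Pmat M hπ) t).1 s sa.1)) (hπ.1 sa.1 sa.2)
  · calc M.disc ^ t * (Pmat M π ^ t) s sa.1 * π sa.1 sa.2
        ≤ M.disc ^ t * 1 * 1 := by
          refine mul_le_mul (mul_le_mul le_rfl
            (isStoch_entry_le_one (isStoch_pow (isStoch_Pmat M hπ) t) s sa.1)
            ((isStoch_pow (isStoch_Pmat M hπ) t).1 s sa.1)
            (pow_nonneg M.disc_nonneg t)) (pol_le_one hπ sa.1 sa.2) (hπ.1 sa.1 sa.2)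
            (by have := M.disc_nonneg; positivity)
      _ = M.disc ^ t := by ring

lemma Vcoef_nonneg (M : MDP S A) {π : S → A → ℝ} (hπ : IsPolicy π) (s : S) (sa : S × A) :
    0 ≤ Vcoef M π s sa :=
  tsum_nonneg fun t => mul_nonneg (mul_nonneg (pow_nonneg M.disc_nonneg t)
    ((isStoch_pow (isStoch_Pmat M hπ) t).1 s sa.1)) (hπ.1 sa.1 sa.2)

lemma Vcoef_le (M : MDP S A) {π : S → A → ℝ} (hπ : IsPolicy π) (s : S) (sa : S × A) :
    Vcoef M π s sa ≤ (1 - M.disc)⁻¹ := by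
  rw [← tsum_geometric_of_lt_one M.disc_nonneg M.disc_lt_one]
  refine Summable.tsum_le_tsum (fun t => ?_) (Vcoef_summable M hπ s sa)
    (summable_geometric_of_lt_one M.disc_nonneg M.disc_lt_one)
  calc M.disc ^ t * (Pmat M π ^ t) s sa.1 * π sa.1 sa.2
      ≤ M.disc ^ t * 1 * 1 := by
        refine mul_le_mul (mul_le_mul le_rfl
          (isStoch_entry_le_one (isStoch_pow (isStoch_Pmat M hπ) t) s sa.1)
          ((isStoch_pow (isStoch_Pmat M hπ) t).1 s sa.1)
          (pow_nonneg M.disc_nonneg t)) (pol_le_one hπ sa.1 sa.2) (hπ.1 sa.1 sa.2)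
          (by have := M.disc_nonneg; positivity)
    _ = M.disc ^ t := by ring

/-- The value function is a linear functional of the reward. -/
lemma Vpi_rep (M : MDP S A) {π : S → A → ℝ} (hπ : IsPolicy π) (r : S × A → ℝ) (s : S) :
    Vpi M π r s = ∑ sa : S × A, Vcoef M π s sa * r sa := by
  have h1 : ∀ t : ℕ, M.disc ^ t * ((Pmat M π ^ t).mulVec (fun s' => ∑ a, π s' a * r (s', a))) s
      = ∑ sa : S × A, (M.disc ^ t * (Pmat M π ^ t) s sa.1 * π sa.1 sa.2) * r sa := by
    intro t
    rw [Fintype.sum_prod_type]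
    simp only [Matrix.mulVec, dotProduct, Finset.mul_sum]
    exact Finset.sum_congr rfl fun s' _ => Finset.sum_congr rfl fun a _ => by ring
  calc Vpi M π r s
      = ∑' t : ℕ, ∑ sa : S × A, (M.disc ^ t * (Pmat M π ^ t) s sa.1 * π sa.1 sa.2) * r sa :=
        tsum_congr h1
    _ = ∑ sa : S × A, ∑' t : ℕ, (M.disc ^ t * (Pmat M π ^ t) s sa.1 * π sa.1 sa.2) * r sa :=
        Summable.tsum_finsetSum fun sa _ => (Vcoef_summable M hπ s sa).mul_right _
    _ = ∑ sa : S × A, Vcoef M π s sa * r sa :=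
        Finset.sum_congr rfl fun sa _ => tsum_mul_right

/-- The uniform bound constant. -/
noncomputable def Bbound (M : MDP S A) : ℝ :=
  (Fintype.card (S × A) : ℝ) * (1 - M.disc)⁻¹

lemma Bbound_nonneg (M : MDP S A) : 0 ≤ Bbound M :=
  mul_nonneg (Nat.cast_nonneg _) (inv_nonneg.2 (by linarith [M.disc_lt_one]))

lemma Vpi_abs_le (M : MDP S A) {π : S → A → ℝ} (hπ : IsPolicy π) (r : S × A → ℝ) (s : S) :
    |Vpi M π r s| ≤ Bbound M * ‖r‖ := by
  rw [Vpi_rep M hπ]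
  calc |∑ sa : S × A, Vcoef M π s sa * r sa| ≤ ∑ sa : S × A, |Vcoef M π s sa * r sa| :=
        Finset.abs_sum_le_sum_abs _ _
    _ ≤ ∑ _sa : S × A, (1 - M.disc)⁻¹ * ‖r‖ := by
        refine Finset.sum_le_sum fun sa _ => ?_
        rw [abs_mul, abs_of_nonneg (Vcoef_nonneg M hπ s sa)]
        refine mul_le_mul (Vcoef_le M hπ s sa) ?_ (abs_nonneg _)
          (inv_nonneg.2 (by linarith [M.disc_lt_one]))
        exact (Real.norm_eq_abs (r sa)) ▸ norm_le_pi_norm r sa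
    _ = Bbound M * ‖r‖ := by
        rw [Finset.sum_const, Finset.card_univ, nsmul_eq_mul, Bbound, mul_assoc]

lemma Vpi_sub (M : MDP S A) {π : S → A → ℝ} (hπ : IsPolicy π) (r r' : S × A → ℝ) (s : S) :
    Vpi M π (r - r') s = Vpi M π r s - Vpi M π r' s := by
  simp only [Vpi_rep M hπ, Pi.sub_apply, mul_sub, Finset.sum_sub_distrib]

lemma Vpi_continuous (M : MDP S A) {π : S → A → ℝ} (hπ : IsPolicy π) (s : S) :
    Continuous fun r : S × A → ℝ => Vpi M π r s := by
  have : (fun r : S × A → ℝ => Vpi M π r s)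
      = fun r : S × A → ℝ => ∑ sa : S × A, Vcoef M π s sa * r sa :=
    funext fun r => Vpi_rep M hπ r s
  rw [this]
  exact continuous_finset_sum _ fun sa _ => continuous_const.mul (continuous_apply sa)

end Aux
lemma integrableOn_of_dom {α : Type} [MeasurableSpace α] (μ : MeasureTheory.Measure α)
    (F : Set α) (h g : α → ℝ)
    (hint : (∫⁻ r in F, ENNReal.ofReal (h r) ∂μ) < ⊤)
    (hg : MeasureTheory.AEStronglyMeasurable g (μ.restrict F))
    (Cst : ℝ) (hC : 0 ≤ Cst) (hb : ∀ r, |g r| ≤ Cst * h r) :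
    MeasureTheory.IntegrableOn g F μ := by
  refine ⟨hg, ?_⟩
  rw [MeasureTheory.hasFiniteIntegral_iff_norm]
  calc (∫⁻ r in F, ENNReal.ofReal ‖g r‖ ∂μ)
      ≤ ∫⁻ r in F, ENNReal.ofReal Cst * ENNReal.ofReal (h r) ∂μ := by
        refine MeasureTheory.lintegral_mono fun r => ?_
        rw [← ENNReal.ofReal_mul hC]
        exact ENNReal.ofReal_le_ofReal (by rw [Real.norm_eq_abs]; exact hb r)
    _ = ENNReal.ofReal Cst * ∫⁻ r in F, ENNReal.ofReal (h r) ∂μ :=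
        MeasureTheory.lintegral_const_mul' _ _ ENNReal.ofReal_ne_top
    _ < ⊤ := ENNReal.mul_lt_top ENNReal.ofReal_lt_top hint

/-- the minimizers of the weighted average suboptimality coincide with the
maximizers of the value of the mean reward `r_w`. -/
theorem statement6 {S A : Type} [Fintype S] [Fintype A] [DecidableEq S] [DecidableEq A]
    (μ : MeasureTheory.Measure ((S × A) → ℝ)) (F : Set ((S × A) → ℝ))
    (w : ((S × A) → ℝ) → ℝ) (hw : Measurable w) (hw01 : ∀ r, w r ∈ Set.Icc (0 : ℝ) 1)
    (M' : MDP S A) (c : S × A → ℝ) (k : ℝ) (hk : 0 ≤ k)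
    (hint : (∫⁻ r in F, ENNReal.ofReal (w r * (1 + ‖r‖)) ∂μ) < ⊤)
    (hne : ∃ π, IsPolicy π ∧ Vpi M' π c M'.s0 ≤ k) :
    {π' : S → A → ℝ | (IsPolicy π' ∧ Vpi M' π' c M'.s0 ≤ k) ∧
        ∀ π'' : S → A → ℝ, IsPolicy π'' → Vpi M' π'' c M'.s0 ≤ k →
          (∫ r in F, w r * ((⨆ π : {π : S → A → ℝ // IsPolicy π ∧ Vpi M' π c M'.s0 ≤ k},
              Vpi M' π.1 r M'.s0) - Vpi M' π' r M'.s0) ∂μ) ≤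
          (∫ r in F, w r * ((⨆ π : {π : S → A → ℝ // IsPolicy π ∧ Vpi M' π c M'.s0 ≤ k},
              Vpi M' π.1 r M'.s0) - Vpi M' π'' r M'.s0) ∂μ)} =
    {π' : S → A → ℝ | (IsPolicy π' ∧ Vpi M' π' c M'.s0 ≤ k) ∧
        ∀ π'' : S → A → ℝ, IsPolicy π'' → Vpi M' π'' c M'.s0 ≤ k →
          Vpi M' π'' (fun sa => ∫ r in F, w r * r sa ∂μ) M'.s0 ≤
            Vpi M' π' (fun sa => ∫ r in F, w r * r sa ∂μ) M'.s0} := by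
  classical
  obtain ⟨π0, hπ0⟩ := hne
  haveI hNE : Nonempty {π : S → A → ℝ // IsPolicy π ∧ Vpi M' π c M'.s0 ≤ k} := ⟨⟨π0, hπ0⟩⟩
  set Csup : (S × A → ℝ) → ℝ :=
    fun r => ⨆ π : {π : S → A → ℝ // IsPolicy π ∧ Vpi M' π c M'.s0 ≤ k}, Vpi M' π.1 r M'.s0
    with hCsup
  set B := Bbound M' with hBdef
  have hB0 : 0 ≤ B := Bbound_nonneg M'
  have hw0 : ∀ r, 0 ≤ w r := fun r => (hw01 r).1
  have hbdd : ∀ r, BddAbove (Set.range fun π : {π : S → A → ℝ // IsPolicy π ∧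
      Vpi M' π c M'.s0 ≤ k} => Vpi M' π.1 r M'.s0) := by
    intro r
    refine ⟨B * ‖r‖, ?_⟩
    rintro _ ⟨π, rfl⟩
    exact (abs_le.1 (Vpi_abs_le M' π.2.1 r M'.s0)).2
  have hCabs : ∀ r, |Csup r| ≤ B * ‖r‖ := by
    intro r
    refine abs_le.2 ⟨?_, ciSup_le fun π => (abs_le.1 (Vpi_abs_le M' π.2.1 r M'.s0)).2⟩
    calc -(B * ‖r‖) ≤ Vpi M' π0 r M'.s0 := (abs_le.1 (Vpi_abs_le M' hπ0.1 r M'.s0)).1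
      _ ≤ Csup r := le_ciSup (hbdd r) ⟨π0, hπ0⟩
  have hClip : ∀ r r', Csup r ≤ Csup r' + B * ‖r - r'‖ := by
    intro r r'
    refine ciSup_le fun π => ?_
    have h1 : Vpi M' π.1 r M'.s0 - Vpi M' π.1 r' M'.s0 ≤ B * ‖r - r'‖ := by
      have h := (abs_le.1 (Vpi_abs_le M' π.2.1 (r - r') M'.s0)).2
      rwa [Vpi_sub M' π.2.1] at h
    have h2 : Vpi M' π.1 r' M'.s0 ≤ Csup r' := le_ciSup (hbdd r') π
    linarith
  have hCcont : Continuous Csup := by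
    refine (LipschitzWith.of_dist_le_mul (K := B.toNNReal) fun r r' => ?_).continuous
    rw [Real.dist_eq, dist_eq_norm, Real.coe_toNNReal B hB0]
    have h1 := hClip r r'
    have h2 := hClip r' r
    rw [norm_sub_rev r' r] at h2
    exact abs_sub_le_iff.2 ⟨by linarith, by linarith⟩
  -- Integrability facts
  have hIV : ∀ (π : S → A → ℝ), IsPolicy π →
      IntegrableOn (fun r => w r * Vpi M' π r M'.s0) F μ := by
    intro π hπ
    refine integrableOn_of_dom μ F _ _ hint
      ((hw.mul (Vpi_continuous M' hπ M'.s0).measurable).aestronglyMeasurable) B hB0 fun r => ?_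
    rw [abs_mul, abs_of_nonneg (hw0 r)]
    calc w r * |Vpi M' π r M'.s0| ≤ w r * (B * (1 + ‖r‖)) := by
          refine mul_le_mul_of_nonneg_left ?_ (hw0 r)
          calc |Vpi M' π r M'.s0| ≤ B * ‖r‖ := Vpi_abs_le M' hπ r M'.s0
            _ ≤ B * (1 + ‖r‖) := by nlinarith [norm_nonneg r]
      _ = B * (w r * (1 + ‖r‖)) := by ring
  have hIC : IntegrableOn (fun r => w r * Csup r) F μ := by
    refine integrableOn_of_dom μ F _ _ hint
      ((hw.mul hCcont.measurable).aestronglyMeasurable) B hB0 fun r => ?_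
    rw [abs_mul, abs_of_nonneg (hw0 r)]
    calc w r * |Csup r| ≤ w r * (B * (1 + ‖r‖)) := by
          refine mul_le_mul_of_nonneg_left ?_ (hw0 r)
          calc |Csup r| ≤ B * ‖r‖ := hCabs r
            _ ≤ B * (1 + ‖r‖) := by nlinarith [norm_nonneg r]
      _ = B * (w r * (1 + ‖r‖)) := by ring
  have hIr : ∀ sa : S × A, IntegrableOn (fun r => w r * r sa) F μ := by
    intro sa
    refine integrableOn_of_dom μ F _ _ hint
      ((hw.mul (measurable_pi_apply sa)).aestronglyMeasurable) 1 zero_le_one fun r => ?_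
    rw [abs_mul, abs_of_nonneg (hw0 r), one_mul]
    refine mul_le_mul_of_nonneg_left ?_ (hw0 r)
    calc |r sa| ≤ ‖r‖ := (Real.norm_eq_abs (r sa)) ▸ norm_le_pi_norm r sa
      _ ≤ 1 + ‖r‖ := by linarith [norm_nonneg r]
  -- Swapping the integral with the (linear) value function
  have hswap : ∀ (π : S → A → ℝ), IsPolicy π →
      Vpi M' π (fun sa => ∫ r in F, w r * r sa ∂μ) M'.s0
        = ∫ r in F, w r * Vpi M' π r M'.s0 ∂μ := by
    intro π hπ
    rw [Vpi_rep M' hπ]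
    calc ∑ sa : S × A, Vcoef M' π M'.s0 sa * ∫ r in F, w r * r sa ∂μ
        = ∑ sa : S × A, ∫ r in F, Vcoef M' π M'.s0 sa * (w r * r sa) ∂μ :=
          Finset.sum_congr rfl fun sa _ => (integral_const_mul _ _).symm
      _ = ∫ r in F, ∑ sa : S × A, Vcoef M' π M'.s0 sa * (w r * r sa) ∂μ :=
          (integral_finset_sum _ fun sa _ => ((hIr sa).const_mul _)).symm
      _ = ∫ r in F, w r * Vpi M' π r M'.s0 ∂μ := by
          refine integral_congr_ae (Filter.Eventually.of_forall fun r => ?_)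
          dsimp only
          rw [Vpi_rep M' hπ, Finset.mul_sum]
          exact Finset.sum_congr rfl fun sa _ => by ring
  have hsplit : ∀ (π : S → A → ℝ), IsPolicy π →
      (∫ r in F, w r * (Csup r - Vpi M' π r M'.s0) ∂μ)
        = (∫ r in F, w r * Csup r ∂μ) - ∫ r in F, w r * Vpi M' π r M'.s0 ∂μ := by
    intro π hπ
    simp only [mul_sub]
    exact integral_sub hIC (hIV π hπ)
  have key : ∀ π' π'' : S → A → ℝ, IsPolicy π' → IsPolicy π'' →
      ((∫ r in F, w r * (Csup r - Vpi M' π' r M'.s0) ∂μ)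
        ≤ (∫ r in F, w r * (Csup r - Vpi M' π'' r M'.s0) ∂μ)
      ↔ Vpi M' π'' (fun sa => ∫ r in F, w r * r sa ∂μ) M'.s0
        ≤ Vpi M' π' (fun sa => ∫ r in F, w r * r sa ∂μ) M'.s0) := by
    intro π' π'' h' h''
    rw [hsplit π' h', hsplit π'' h'', sub_le_sub_iff_left, hswap π' h', hswap π'' h'']
  ext π'
  simp only [Set.mem_setOf_eq]
  constructor
  · rintro ⟨hf, hmin⟩
    exact ⟨hf, fun π'' h1 h2 => (key π' π'' hf.1 h1).1 (hmin π'' h1 h2)⟩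
  · rintro ⟨hf, hmax⟩
    exact ⟨hf, fun π'' h1 h2 => (key π' π'' hf.1 h1).2 (hmax π'' h1 h2)⟩
end
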